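/- arXiv:1603.06874 — 9 statements merged into one kernel-verified Lean document; each statement's English description precedes it below -/
import Mathlib

section
/- Let R be a commutative ring, A a finite free R-module of rank r, and 0 < s < r integers. Let B ⊆ A and C ⊆ A be R-submodules such that B is finite free of rank s, C is finite free of rank r−s, and the quotient modules A/B and A/C are finite free (necessarily of ranks r−s and s respectively). Let f : C → A/B and g : B → A/C be the natural maps (inclusion followed by the quotient projection), and let σ : A/B → A and τ : A/C → A be arbitrary R-linear sections of the quotient projections. Then for every β ∈ ⋀^s B and every γ ∈ ⋀^{r−s} C one has the identity in ⋀^r A: ι_B(β) ∧ (⋀^{r−s} σ)((⋀^{r−s} f)(γ)) = (−1)^{s(r−s)} · ι_C(γ) ∧ (⋀^s τ)((⋀^s g)(β)), where ι_B : ⋀^s B → ⋀^s A and ι_C : ⋀^{r−s} C → ⋀^{r−s} A are the maps induced by the inclusions, and ∧ denotes the wedge product ⋀^s A × ⋀^{r−s} A → ⋀^r A. In particular the identity is independent of the choice of sections σ and τ. (This is the module-theoretic form of the paper's key Proposition: the determinant section x of the natural map C → A/B and the determinant section y of the natural map B → A/C coincide under the canonical isomorphism det(A/B) ⊗ det(C)^{-1}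 ≅ det(A/C) ⊗ det(B)^{-1}, both being induced by the determinant of the map B ⊕ C → A.) -/
open ExteriorAlgebra

section Aux

variable {R : Type*} [CommRing R] {M : Type*} [AddCommGroup M] [Module R M]

lemma auxDSA_ιMulti_mul_ι {n : ℕ} (v : Fin n → M) (m : M) :
    ιMulti R n v * ι R m = ιMulti R (n + 1) (Fin.snoc v m) := by
  rw [ιMulti_apply, ιMulti_apply, List.ofFn_succ']
  simp [Fin.snoc_castSucc]

lemma auxDSA_ιMulti_eq_zero {n : ℕ} [Module.Finite R M] [Module.Free R M]
    (h : Module.finrank R M < n) (v : Fin n → M) : ιMulti R n v = 0 := by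
  classical
  rcases subsingleton_or_nontrivial R with hR | hR
  · haveI := Module.subsingleton R (ExteriorAlgebra R M)
    exact Subsingleton.elim _ _
  set b := Module.Free.chooseBasis R M with hb
  have hv : v = fun i => ∑ j, b.repr (v i) j • b j := by
    funext i; exact (b.sum_repr (v i)).symm
  rw [hv]
  rw [show (ιMulti R n) (fun i => ∑ j, b.repr (v i) j • b j)
      = (ιMulti R n (M := M)).toMultilinearMap (fun i => ∑ j, b.repr (v i) j • b j) from rfl,
    MultilinearMap.map_sum]
  apply Finset.sum_eq_zero
  intro j _
  rw [MultilinearMap.map_smul_univ]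
  have hnotinj : ¬ Function.Injective (fun i => b (j i)) := by
    intro hinj
    have hjinj : Function.Injective j := fun a a' hh => hinj (congrArg b hh)
    have := Fintype.card_le_of_injective j hjinj
    rw [Fintype.card_fin, ← Module.finrank_eq_card_chooseBasisIndex] at this
    omega
  have hz : (ιMulti R n (M := M)) (fun i => b (j i)) = 0 :=
    AlternatingMap.map_eq_zero_of_not_injective _ _ hnotinj
  rw [show (ιMulti R n (M := M)).toMultilinearMap (fun i => b (j i))
      = (ιMulti R n (M := M)) (fun i => b (j i)) from rfl, hz, smul_zero]

lemma auxDSA_mul_ι_eq_zero {n : ℕ} [Module.Finite R M] [Module.Free R M]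
    (hr : Module.finrank R M = n) {x : ExteriorAlgebra R M} (hx : x ∈ ⋀[R]^n M) (m : M) :
    x * ι R m = 0 := by
  rw [← ιMulti_span_fixedDegree] at hx
  induction hx using Submodule.span_induction with
  | mem y hy =>
    obtain ⟨v, rfl⟩ := hy
    rw [auxDSA_ιMulti_mul_ι, auxDSA_ιMulti_eq_zero (by omega)]
  | zero => simp
  | add a b _ _ ha hb => rw [add_mul, ha, hb, add_zero]
  | smul r a _ ha => rw [smul_mul_assoc, ha, smul_zero]

lemma auxDSA_ιMulti_comm {n : ℕ} (v : Fin n → M) (m : M) :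
    ιMulti R n v * ι R m = ((-1 : R) ^ n) • (ι R m * ιMulti R n v) := by
  induction n with
  | zero => simp [ιMulti_zero_apply]
  | succ k ih =>
    have hswap : ι R (v 0) * ι R m = -(ι R m * ι R (v 0)) :=
      eq_neg_of_add_eq_zero_left (ι_add_mul_swap (v 0) m)
    rw [ιMulti_succ_apply, mul_assoc, ih (Matrix.vecTail v), mul_smul_comm, ← mul_assoc,
      hswap, neg_mul, smul_neg, pow_succ, mul_comm ((-1 : R) ^ k), mul_smul, neg_one_smul,
      mul_assoc]

lemma auxDSA_super {n : ℕ} {x : ExteriorAlgebra R M} (hx : x ∈ ⋀[R]^n M) (m : M) :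
    x * ι R m = ((-1 : R) ^ n) • (ι R m * x) := by
  rw [← ιMulti_span_fixedDegree] at hx
  induction hx using Submodule.span_induction with
  | mem y hy => obtain ⟨v, rfl⟩ := hy; exact auxDSA_ιMulti_comm v m
  | zero => simp
  | add a b _ _ ha hb => rw [add_mul, ha, hb, mul_add, smul_add]
  | smul r a _ ha => rw [smul_mul_assoc, ha, mul_smul_comm, smul_comm]

lemma auxDSA_mul_ιMulti_comm {p q : ℕ} {x : ExteriorAlgebra R M} (hx : x ∈ ⋀[R]^p M)
    (w : Fin q → M) :
    x * ιMulti R q w = ((-1 : R) ^ (p * q)) • (ιMulti R q w * x) := by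
  induction q with
  | zero => simp [ιMulti_zero_apply]
  | succ k ih =>
    rw [ιMulti_succ_apply, ← mul_assoc, auxDSA_super hx (w 0), smul_mul_assoc, mul_assoc,
      ih (Matrix.vecTail w), mul_smul_comm, smul_smul, ← pow_add, ← mul_assoc,
      show p + p * k = p * (k + 1) from by ring]

lemma auxDSA_super2 {p q : ℕ} {x y : ExteriorAlgebra R M} (hx : x ∈ ⋀[R]^p M)
    (hy : y ∈ ⋀[R]^q M) :
    x * y = ((-1 : R) ^ (p * q)) • (y * x) := by
  rw [← ιMulti_span_fixedDegree] at hy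
  induction hy using Submodule.span_induction with
  | mem y hy => obtain ⟨w, rfl⟩ := hy; exact auxDSA_mul_ιMulti_comm hx w
  | zero => simp
  | add a b _ _ ha hb => rw [mul_add, ha, hb, add_mul, smul_add]
  | smul r a _ ha => rw [mul_smul_comm, ha, smul_mul_assoc, smul_comm]

variable {N : Type*} [AddCommGroup N] [Module R N]

lemma auxDSA_map_mem {n : ℕ} (φ : M →ₗ[R] N) {x : ExteriorAlgebra R M} (hx : x ∈ ⋀[R]^n M) :
    map φ x ∈ ⋀[R]^n N := by
  rw [← ιMulti_span_fixedDegree] at hx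
  induction hx using Submodule.span_induction with
  | mem y hy =>
    obtain ⟨v, rfl⟩ := hy
    rw [map_apply_ιMulti]
    exact ιMulti_range R n (Set.mem_range_self _)
  | zero => simp
  | add a b _ _ ha hb => rw [map_add]; exact Submodule.add_mem _ ha hb
  | smul r a _ ha => rw [map_smul]; exact Submodule.smul_mem _ r ha

/-- Replacement for pure wedges. -/
lemma auxDSA_replace_pure {s q : ℕ} {x : ExteriorAlgebra R N} (hx : x ∈ ⋀[R]^s N)
    (h k : M →ₗ[R] N) (hann : ∀ c : M, x * ι R (h c - k c) = 0) (v : Fin q → M) :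
    x * ιMulti R q (fun i => h (v i)) = x * ιMulti R q (fun i => k (v i)) := by
  induction q with
  | zero => simp [ιMulti_zero_apply]
  | succ j ih =>
    rw [ιMulti_succ_apply, ιMulti_succ_apply]
    have hx0 : x * ι R (h (v 0)) = x * ι R (k (v 0)) := by
      have := hann (v 0)
      rw [map_sub, mul_sub, sub_eq_zero] at this
      exact this
    have htail : (Matrix.vecTail fun i => h (v i)) = fun i => h (Matrix.vecTail v i) := rfl
    have ktail : (Matrix.vecTail fun i => k (v i)) = fun i => k (Matrix.vecTail v i) := rfl
    rw [htail, ktail, ← mul_assoc, ← mul_assoc, hx0, auxDSA_super hx (k (v 0)),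
      smul_mul_assoc, smul_mul_assoc, mul_assoc, mul_assoc, ih (Matrix.vecTail v)]

lemma auxDSA_replace {s q : ℕ} {x : ExteriorAlgebra R N} (hx : x ∈ ⋀[R]^s N)
    (h k : M →ₗ[R] N) (hann : ∀ c : M, x * ι R (h c - k c) = 0)
    {γ : ExteriorAlgebra R M} (hγ : γ ∈ ⋀[R]^q M) :
    x * map h γ = x * map k γ := by
  rw [← ιMulti_span_fixedDegree] at hγ
  induction hγ using Submodule.span_induction with
  | mem y hy =>
    obtain ⟨v, rfl⟩ := hy
    rw [map_apply_ιMulti, map_apply_ιMulti]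
    exact auxDSA_replace_pure hx h k hann v
  | zero => simp
  | add a b _ _ ha hb => rw [map_add, map_add, mul_add, mul_add, ha, hb]
  | smul r a _ ha => rw [map_smul, map_smul, mul_smul_comm, mul_smul_comm, ha]

end Aux

/-- **Key Proposition (module-theoretic form).**
Let `A` be a finite free `R`-module of rank `r`, `B, C ⊆ A` submodules that are finite free of
ranks `s` and `r - s`, with `A/B` and `A/C` finite free. Let `f : C → A/B` and `g : B → A/C`
be the natural maps, and `σ, τ` arbitrary linear sections of the quotient projections.
Then for `β ∈ ⋀^s B` and `γ ∈ ⋀^{r-s} C` one has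
`ι_B(β) ∧ (⋀^{r-s} σ)((⋀^{r-s} f)(γ)) = (-1)^{s(r-s)} · ι_C(γ) ∧ (⋀^s τ)((⋀^s g)(β))`
in `⋀^r A` (viewed inside the exterior algebra of `A`, where the maps induced on exterior
powers are the restrictions of the induced maps of exterior algebras, and the wedge product
is the multiplication of the exterior algebra). -/
theorem determinant_sections_agree
    (R : Type*) [CommRing R] (A : Type*) [AddCommGroup A] [Module R A]
    (r s : ℕ) (hs : 0 < s) (hsr : s < r)
    [Module.Finite R A] [Module.Free R A] (hrA : Module.finrank R A = r)
    (B C : Submodule R A)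
    [Module.Finite R B] [Module.Free R B] (hrB : Module.finrank R B = s)
    [Module.Finite R C] [Module.Free R C] (hrC : Module.finrank R C = r - s)
    [Module.Finite R (A ⧸ B)] [Module.Free R (A ⧸ B)]
    [Module.Finite R (A ⧸ C)] [Module.Free R (A ⧸ C)]
    (f : C →ₗ[R] A ⧸ B) (hf : f = B.mkQ.comp C.subtype)
    (g : B →ₗ[R] A ⧸ C) (hg : g = C.mkQ.comp B.subtype)
    (σ : (A ⧸ B) →ₗ[R] A) (hσ : B.mkQ.comp σ = LinearMap.id)
    (τ : (A ⧸ C) →ₗ[R] A) (hτ : C.mkQ.comp τ = LinearMap.id)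
    (β : ⋀[R]^s (B : Type _)) (γ : ⋀[R]^(r - s) (C : Type _)) :
    ExteriorAlgebra.map B.subtype (β : ExteriorAlgebra R B) *
        ExteriorAlgebra.map σ (ExteriorAlgebra.map f (γ : ExteriorAlgebra R C)) =
      ((-1 : R) ^ (s * (r - s))) •
        (ExteriorAlgebra.map C.subtype (γ : ExteriorAlgebra R C) *
          ExteriorAlgebra.map τ (ExteriorAlgebra.map g (β : ExteriorAlgebra R B))) := by
  set x := ExteriorAlgebra.map B.subtype (β : ExteriorAlgebra R B) with hxdef
  set y := ExteriorAlgebra.map C.subtype (γ : ExteriorAlgebra R C) with hydef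
  have hβ : (β : ExteriorAlgebra R B) ∈ ⋀[R]^s (B : Type _) := β.2
  have hγ : (γ : ExteriorAlgebra R C) ∈ ⋀[R]^(r - s) (C : Type _) := γ.2
  have hx : x ∈ ⋀[R]^s A := auxDSA_map_mem _ hβ
  have hy : y ∈ ⋀[R]^(r - s) A := auxDSA_map_mem _ hγ
  -- annihilation of B-elements by x
  have hannB : ∀ b : A, b ∈ B → x * ι R b = 0 := by
    intro b hb
    have : ι R b = ExteriorAlgebra.map B.subtype (ι R (⟨b, hb⟩ : B)) := by
      rw [map_apply_ι]; rfl
    rw [this, hxdef, ← map_mul, auxDSA_mul_ι_eq_zero hrB hβ, map_zero]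
  have hannC : ∀ c : A, c ∈ C → y * ι R c = 0 := by
    intro c hc
    have : ι R c = ExteriorAlgebra.map C.subtype (ι R (⟨c, hc⟩ : C)) := by
      rw [map_apply_ι]; rfl
    rw [this, hydef, ← map_mul, auxDSA_mul_ι_eq_zero hrC hγ, map_zero]
  -- LHS simplification
  have hcompσ : ExteriorAlgebra.map σ (ExteriorAlgebra.map f (γ : ExteriorAlgebra R C))
      = ExteriorAlgebra.map (σ.comp f) (γ : ExteriorAlgebra R C) := by
    rw [← map_comp_map]; rfl
  have hcompτ : ExteriorAlgebra.map τ (ExteriorAlgebra.map g (β : ExteriorAlgebra R B))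
      = ExteriorAlgebra.map (τ.comp g) (β : ExteriorAlgebra R B) := by
    rw [← map_comp_map]; rfl
  have hsf : ∀ c : C, (σ.comp f) c - C.subtype c ∈ B := by
    intro c
    have h1 : B.mkQ (σ (f c)) = f c := LinearMap.congr_fun hσ (f c)
    have h2 : B.mkQ (C.subtype c) = f c := by rw [hf]; rfl
    have h0 : B.mkQ ((σ.comp f) c - C.subtype c) = 0 := by
      rw [map_sub, LinearMap.comp_apply, h1, h2, sub_self]
    rw [Submodule.mkQ_apply] at h0
    exact (Submodule.Quotient.mk_eq_zero B).mp h0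
  have htg : ∀ b : B, (τ.comp g) b - B.subtype b ∈ C := by
    intro b
    have h1 : C.mkQ (τ (g b)) = g b := LinearMap.congr_fun hτ (g b)
    have h2 : C.mkQ (B.subtype b) = g b := by rw [hg]; rfl
    have h0 : C.mkQ ((τ.comp g) b - B.subtype b) = 0 := by
      rw [map_sub, LinearMap.comp_apply, h1, h2, sub_self]
    rw [Submodule.mkQ_apply] at h0
    exact (Submodule.Quotient.mk_eq_zero C).mp h0
  have hL : x * ExteriorAlgebra.map σ (ExteriorAlgebra.map f (γ : ExteriorAlgebra R C))
      = x * y := by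
    rw [hcompσ, hydef]
    exact auxDSA_replace hx (σ.comp f) C.subtype (fun c => hannB _ (hsf c)) hγ
  have hR : y * ExteriorAlgebra.map τ (ExteriorAlgebra.map g (β : ExteriorAlgebra R B))
      = y * x := by
    rw [hcompτ, hxdef]
    exact auxDSA_replace hy (τ.comp g) B.subtype (fun b => hannC _ (htg b)) hβ
  rw [hL, hR]
  exact auxDSA_super2 hx hy
end

section
/- Let R be a nontrivial commutative ring, A a finite free R-module of rank r, and 0 < s < r integers. Let B ⊆ A and C ⊆ A be R-submodules such that B is finite free of rank s, C is finite free of rank r−s, and the quotients A/B and A/C are finite free. Let f : C → A/B and g : B → A/C be the natural maps (inclusion followed by projection). Fix R-bases of the four free modules B, C, A/B, A/C, and let det f ∈ R be the determinant of the matrix of f with respect to the chosen bases of C and A/B, and det g ∈ R the determinant of the matrix of g with respect to the chosen bases of B and A/C. Then there exists a unit u ∈ R^× with det f = u · det g; in particular, det f and det g generate the same ideal of R. -/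
open LinearMap Matrix

section Aux

variable {R : Type*} [CommRing R]

lemma aux_toMatrix_prodMap
    {M₁ M₂ N₁ N₂ : Type*} [AddCommGroup M₁] [Module R M₁] [AddCommGroup M₂] [Module R M₂]
    [AddCommGroup N₁] [Module R N₁] [AddCommGroup N₂] [Module R N₂]
    {ι₁ ι₂ κ₁ κ₂ : Type*} [Fintype ι₁] [Fintype ι₂] [DecidableEq ι₁] [DecidableEq ι₂]
    [Fintype κ₁] [Fintype κ₂]
    (b₁ : Module.Basis ι₁ R M₁) (b₂ : Module.Basis ι₂ R M₂) (c₁ : Module.Basis κ₁ R N₁) (c₂ : Module.Basis κ₂ R N₂)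
    (φ : M₁ →ₗ[R] N₁) (ψ : M₂ →ₗ[R] N₂) :
    LinearMap.toMatrix (b₁.prod b₂) (c₁.prod c₂) (φ.prodMap ψ) =
      Matrix.fromBlocks (LinearMap.toMatrix b₁ c₁ φ) 0 0 (LinearMap.toMatrix b₂ c₂ ψ) := by
  ext (i | i) (j | j) <;>
    simp [LinearMap.toMatrix_apply, Module.Basis.prod_apply, Module.Basis.prod_repr_inl, Module.Basis.prod_repr_inr]

lemma aux_isUnit_det_equiv
    {M N : Type*} [AddCommGroup M] [Module R M] [AddCommGroup N] [Module R N]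
    {ι : Type*} [Fintype ι] [DecidableEq ι]
    (bM : Module.Basis ι R M) (bN : Module.Basis ι R N) (e : M ≃ₗ[R] N) :
    IsUnit (LinearMap.toMatrix bM bN e.toLinearMap).det := by
  have hcomp : e.symm.toLinearMap ∘ₗ e.toLinearMap = LinearMap.id := by
    ext x; simp
  have h : LinearMap.toMatrix bN bM e.symm.toLinearMap * LinearMap.toMatrix bM bN e.toLinearMap
      = 1 := by
    rw [← LinearMap.toMatrix_comp bM bN bM, hcomp, LinearMap.toMatrix_id]
  have := congrArg Matrix.det h
  rw [Matrix.det_mul, Matrix.det_one] at this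
  exact IsUnit.of_mul_eq_one _ (by rw [mul_comm] at this; exact this)

lemma aux_det_reindex
    {M N : Type*} [AddCommGroup M] [Module R M] [AddCommGroup N] [Module R N]
    {ι κ : Type*} [Fintype ι] [DecidableEq ι] [Fintype κ] [DecidableEq κ]
    (bM : Module.Basis ι R M) (bN : Module.Basis ι R N) (e : ι ≃ κ) (h : M →ₗ[R] N) :
    ((LinearMap.toMatrix (bM.reindex e) (bN.reindex e)) h).det
      = ((LinearMap.toMatrix bM bN) h).det := by
  have heq : (LinearMap.toMatrix (bM.reindex e) (bN.reindex e)) h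
      = ((LinearMap.toMatrix bM bN) h).submatrix e.symm e.symm := by
    ext i j
    simp [LinearMap.toMatrix_apply, Module.Basis.reindex_apply, Module.Basis.repr_reindex,
      Finsupp.mapDomain_equiv_apply]
  rw [heq, Matrix.det_submatrix_equiv_self]

/-- shear equivalence `(m, n) ↦ (m + h n, n)` -/
def auxShear {M N : Type*} [AddCommGroup M] [Module R M] [AddCommGroup N] [Module R N]
    (h : N →ₗ[R] M) : (M × N) ≃ₗ[R] (M × N) :=
  LinearEquiv.ofLinear
    (LinearMap.id + (LinearMap.inl R M N).comp (h.comp (LinearMap.snd R M N)))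
    (LinearMap.id - (LinearMap.inl R M N).comp (h.comp (LinearMap.snd R M N)))
    (by apply LinearMap.ext; rintro ⟨m, n⟩; simp)
    (by apply LinearMap.ext; rintro ⟨m, n⟩; simp)

@[simp] lemma auxShear_apply {M N : Type*} [AddCommGroup M] [Module R M] [AddCommGroup N]
    [Module R N] (h : N →ₗ[R] M) (p : M × N) :
    auxShear h p = (p.1 + h p.2, p.2) := by
  cases p; simp [auxShear, Prod.add_def]

/-- splitting equivalence for a quotient with a right inverse of `mkQ` -/
noncomputable def auxSplit {A : Type*} [AddCommGroup A] [Module R A] (B : Submodule R A)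
    (σ : (A ⧸ B) →ₗ[R] A) (hσ : B.mkQ ∘ₗ σ = LinearMap.id) :
    (B × (A ⧸ B)) ≃ₗ[R] A :=
  LinearEquiv.ofBijective (B.subtype.coprod σ) (by
    have hσ' : ∀ x, B.mkQ (σ x) = x := fun x => LinearMap.congr_fun hσ x
    constructor
    · rw [← LinearMap.ker_eq_bot, eq_bot_iff]
      rintro ⟨b, x⟩ hp
      have h0 : (b : A) + σ x = 0 := hp
      have hx : x = 0 := by
        have h1 := congrArg B.mkQ h0
        rw [map_add, hσ', map_zero] at h1
        have hb0 : B.mkQ (b : A) = 0 := (Submodule.Quotient.mk_eq_zero B).mpr b.2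
        rw [hb0, zero_add] at h1
        exact h1
      have hb : (b : A) = 0 := by simpa [hx] using h0
      simp only [Submodule.mem_bot, Prod.mk_eq_zero]
      exact ⟨Subtype.ext hb, hx⟩
    · intro a
      refine ⟨(⟨a - σ (B.mkQ a), ?_⟩, B.mkQ a), ?_⟩
      · have h2 : B.mkQ (a - σ (B.mkQ a)) = 0 := by rw [map_sub, hσ', sub_self]
        exact (Submodule.Quotient.mk_eq_zero B).mp (by rw [← Submodule.mkQ_apply]; exact h2)
      · simp)

@[simp] lemma auxSplit_apply {A : Type*} [AddCommGroup A] [Module R A] (B : Submodule R A)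
    (σ : (A ⧸ B) →ₗ[R] A) (hσ : B.mkQ ∘ₗ σ = LinearMap.id) (p : B × (A ⧸ B)) :
    auxSplit B σ hσ p = (p.1 : A) + σ p.2 := rfl

end Aux

/-- **Determinants of the two natural maps agree up to a unit.**
For `B, C ⊆ A` as in the key Proposition, the determinant of the natural map `f : C → A/B`
and the determinant of the natural map `g : B → A/C`, computed in any chosen bases of the
four finite free modules, differ by multiplication by a unit of `R`; in particular they
generate the same ideal of `R`. -/
theorem det_natural_maps_associated
    (R : Type*) [CommRing R] [Nontrivial R]
    (A : Type*) [AddCommGroup A] [Module R A]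
    (r s : ℕ) (hs : 0 < s) (hsr : s < r)
    [Module.Finite R A] [Module.Free R A] (hrA : Module.finrank R A = r)
    (B C : Submodule R A)
    [Module.Finite R B] [Module.Free R B] (hrB : Module.finrank R B = s)
    [Module.Finite R C] [Module.Free R C] (hrC : Module.finrank R C = r - s)
    [Module.Finite R (A ⧸ B)] [Module.Free R (A ⧸ B)]
    [Module.Finite R (A ⧸ C)] [Module.Free R (A ⧸ C)]
    (f : C →ₗ[R] A ⧸ B) (hf : f = B.mkQ.comp C.subtype)
    (g : B →ₗ[R] A ⧸ C) (hg : g = C.mkQ.comp B.subtype)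
    (bB : Module.Basis (Fin s) R B) (bC : Module.Basis (Fin (r - s)) R C)
    (bAB : Module.Basis (Fin (r - s)) R (A ⧸ B)) (bAC : Module.Basis (Fin s) R (A ⧸ C)) :
    ∃ u : Rˣ, (LinearMap.toMatrix bC bAB f).det = (u : R) * (LinearMap.toMatrix bB bAC g).det := by
  classical
  -- splittings of the two quotient sequences
  obtain ⟨σ, hσ⟩ := B.mkQ.exists_rightInverse_of_surjective (Submodule.range_mkQ B)
  obtain ⟨τ, hτ⟩ := C.mkQ.exists_rightInverse_of_surjective (Submodule.range_mkQ C)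
  have hσ' : ∀ x, B.mkQ (σ x) = x := fun x => LinearMap.congr_fun hσ x
  have hτ' : ∀ x, C.mkQ (τ x) = x := fun x => LinearMap.congr_fun hτ x
  set φ1 : (B × (A ⧸ B)) ≃ₗ[R] A := auxSplit B σ hσ with hφ1
  set φ2 : (C × (A ⧸ C)) ≃ₗ[R] A := auxSplit C τ hτ with hφ2
  set Ψ : A →ₗ[R] (A ⧸ C) × (A ⧸ B) := C.mkQ.prod B.mkQ with hΨ
  set Ψ2 : A →ₗ[R] (A ⧸ B) × (A ⧸ C) := B.mkQ.prod C.mkQ with hΨ2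
  -- the two block factorizations
  have fact1 : Ψ ∘ₗ φ1.toLinearMap
      = (auxShear (C.mkQ ∘ₗ σ)).toLinearMap ∘ₗ (g.prodMap (LinearMap.id : (A ⧸ B) →ₗ[R] A ⧸ B)) := by
    apply LinearMap.ext; rintro ⟨b, x⟩
    have hb : B.mkQ (b : A) = 0 := (Submodule.Quotient.mk_eq_zero B).mpr b.2
    simp [hΨ, hφ1, hg, hσ', hb, map_add, Prod.ext_iff]
  have fact2 : Ψ2 ∘ₗ φ2.toLinearMap
      = (auxShear (B.mkQ ∘ₗ τ)).toLinearMap ∘ₗ (f.prodMap (LinearMap.id : (A ⧸ C) →ₗ[R] A ⧸ C)) := by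
    apply LinearMap.ext; rintro ⟨c, y⟩
    have hc : C.mkQ (c : A) = 0 := (Submodule.Quotient.mk_eq_zero C).mpr c.2
    simp [hΨ2, hφ2, hf, hτ', hc, map_add, Prod.ext_iff]
  -- bases
  set bD1 : Module.Basis (Fin s ⊕ Fin (r - s)) R (B × (A ⧸ B)) := bB.prod bAB
  set bC1 : Module.Basis (Fin s ⊕ Fin (r - s)) R ((A ⧸ C) × (A ⧸ B)) := bAC.prod bAB
  set bD2 : Module.Basis (Fin (r - s) ⊕ Fin s) R (C × (A ⧸ C)) := bC.prod bAC
  set bC2 : Module.Basis (Fin (r - s) ⊕ Fin s) R ((A ⧸ B) × (A ⧸ C)) := bAB.prod bAC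
  set eqi : (Fin (r - s) ⊕ Fin s) ≃ (Fin s ⊕ Fin (r - s)) := Equiv.sumComm _ _
  -- determinant of the first composite
  have hdet1 : (LinearMap.toMatrix bD1 bC1 (Ψ ∘ₗ φ1.toLinearMap)).det
      = (LinearMap.toMatrix bC1 bC1 (auxShear (C.mkQ ∘ₗ σ)).toLinearMap).det
        * (LinearMap.toMatrix bB bAC g).det := by
    rw [fact1, LinearMap.toMatrix_comp bD1 bC1 bC1, Matrix.det_mul,
      aux_toMatrix_prodMap bB bAB bAC bAB g LinearMap.id, LinearMap.toMatrix_id,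
      Matrix.det_fromBlocks_zero₂₁, Matrix.det_one, mul_one]
  have hdet2 : (LinearMap.toMatrix bD2 bC2 (Ψ2 ∘ₗ φ2.toLinearMap)).det
      = (LinearMap.toMatrix bC2 bC2 (auxShear (B.mkQ ∘ₗ τ)).toLinearMap).det
        * (LinearMap.toMatrix bC bAB f).det := by
    rw [fact2, LinearMap.toMatrix_comp bD2 bC2 bC2, Matrix.det_mul,
      aux_toMatrix_prodMap bC bAC bAB bAC f LinearMap.id, LinearMap.toMatrix_id,
      Matrix.det_fromBlocks_zero₂₁, Matrix.det_one, mul_one]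
  -- the chain relating the two composites
  set pc : ((A ⧸ B) × (A ⧸ C)) ≃ₗ[R] ((A ⧸ C) × (A ⧸ B)) :=
    LinearEquiv.prodComm R (A ⧸ B) (A ⧸ C)
  set χ : (B × (A ⧸ B)) ≃ₗ[R] (C × (A ⧸ C)) := φ1 ≪≫ₗ φ2.symm with hχ
  have hchain : Ψ ∘ₗ φ1.toLinearMap
      = pc.toLinearMap ∘ₗ ((Ψ2 ∘ₗ φ2.toLinearMap) ∘ₗ χ.toLinearMap) := by
    apply LinearMap.ext; intro p
    have : φ2 (χ p) = φ1 p := by simp [hχ]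
    simp [this, hΨ, hΨ2, pc]
  have hM : LinearMap.toMatrix bD1 bC1 (Ψ ∘ₗ φ1.toLinearMap)
      = LinearMap.toMatrix (bC2.reindex eqi) bC1 pc.toLinearMap
        * (LinearMap.toMatrix (bD2.reindex eqi) (bC2.reindex eqi) (Ψ2 ∘ₗ φ2.toLinearMap)
          * LinearMap.toMatrix bD1 (bD2.reindex eqi) χ.toLinearMap) := by
    rw [hchain, LinearMap.toMatrix_comp bD1 (bC2.reindex eqi) bC1,
      LinearMap.toMatrix_comp bD1 (bD2.reindex eqi) (bC2.reindex eqi)]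
  -- units
  have hU1 := aux_isUnit_det_equiv bC1 bC1 (auxShear (C.mkQ ∘ₗ σ))
  have hU2 := aux_isUnit_det_equiv bC2 bC2 (auxShear (B.mkQ ∘ₗ τ))
  have hUP := aux_isUnit_det_equiv (bC2.reindex eqi) bC1 pc
  have hUQ := aux_isUnit_det_equiv bD1 (bD2.reindex eqi) χ
  -- put everything together
  have hre : (LinearMap.toMatrix (bD2.reindex eqi) (bC2.reindex eqi) (Ψ2 ∘ₗ φ2.toLinearMap)).det
      = (LinearMap.toMatrix bD2 bC2 (Ψ2 ∘ₗ φ2.toLinearMap)).det :=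
    aux_det_reindex bD2 bC2 eqi _
  have hmain : (hU1.unit : R) * (LinearMap.toMatrix bB bAC g).det
      = (hUP.unit : R) * ((hU2.unit : R) * (LinearMap.toMatrix bC bAB f).det * (hUQ.unit : R)) := by
    rw [hU1.unit_spec, hUP.unit_spec, hU2.unit_spec, hUQ.unit_spec, ← hdet1]
    rw [hM, Matrix.det_mul, Matrix.det_mul, hre, hdet2]
  refine ⟨(hUP.unit * hU2.unit * hUQ.unit)⁻¹ * hU1.unit, ?_⟩
  have hcalc : ((hUP.unit * hU2.unit * hUQ.unit : Rˣ) : R) * (LinearMap.toMatrix bC bAB f).det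
      = (hU1.unit : R) * (LinearMap.toMatrix bB bAC g).det := by
    rw [hmain]; push_cast; ring
  rw [Units.val_mul, mul_assoc, ← hcalc, Units.inv_mul_cancel_left]
end

section
/- Let k be a perfect field of characteristic p > 0 and E a finite-dimensional k-vector space. Let F : E → E be an additive map satisfying F(a·x) = a^p·F(x) for all a ∈ k, x ∈ E (Frobenius-semilinear), and V : E → E an additive map satisfying V(a^p·x) = a·V(x) for all a ∈ k, x ∈ E (semilinear over the inverse of Frobenius). Assume ker F = range V, ker V = range F, and 0 < dim_k(ker F) < dim_k E. Then: (i) V maps ker F into ker F, and F induces an additive endomorphism F̄ of E/ker F; (ii) the restriction V|_{ker F} : ker F → ker F is bijective if and only if F̄ : E/ker F → E/ker F is bijective, and both conditions are equivalent to the internal direct sum decomposition E = ker F ⊕ range F. (This is the compatibility of the Hasse invariant with duality over a perfect field: the Hasse invariant of a p-divisible group G, given by the Verschiebung on the Hodge filtration ker F, is invertible exactly when the Hasse invariant of the Cartier dual G^D, given by the Frobenius on E/ker F, is invertible.) -/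
instance frobSurj (k : Type*) [Field k] (p : ℕ) [Fact p.Prime] [CharP k p] [PerfectRing k p] :
    RingHomSurjective (frobenius k p) :=
  ⟨(frobeniusEquiv k p).surjective⟩

instance frobSymmSurj (k : Type*) [Field k] (p : ℕ) [Fact p.Prime] [CharP k p]
    [PerfectRing k p] : RingHomSurjective ((frobeniusEquiv k p).symm : k →+* k) :=
  ⟨(frobeniusEquiv k p).symm.surjective⟩

/-- A bijective semilinear map over a bijective ring endomorphism preserves rank. -/
lemma rank_eq_of_semilinear_bijective {k : Type*} [Field k] {M N : Type _}
    [AddCommGroup M] [AddCommGroup N] [Module k M] [Module k N]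
    (σ : k →+* k) (hσ : Function.Bijective σ) (f : M →ₛₗ[σ] N)
    (hf : Function.Bijective f) : Module.rank k M = Module.rank k N := by
  have hf' : Function.Bijective f.toAddMonoidHom := hf
  exact rank_eq_of_equiv_equiv σ
    (AddEquiv.ofBijective f.toAddMonoidHom hf') hσ (fun r m => f.map_smulₛₗ r m)

/-- **Compatibility of the Hasse invariant with duality over a perfect field.**
Let `E` be a finite-dimensional vector space over a perfect field `k` of characteristic `p`,
`F : E → E` a Frobenius-semilinear map and `V : E → E` a map semilinear over the inverse of
Frobenius, with `ker F = range V`, `ker V = range F` and `0 < dim ker F < dim E`. Then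
(i) `V` maps `ker F` into `ker F` and `F` induces an additive endomorphism `F̄` of `E/ker F`;
(ii) `V|_{ker F} : ker F → ker F` is bijective iff `F̄` is bijective, and both are equivalent
to the internal direct sum decomposition `E = ker F ⊕ range F`. -/
theorem hasse_invariant_duality_perfect_field
    (k : Type*) [Field k] (p : ℕ) [Fact p.Prime] [CharP k p] [PerfectRing k p]
    (E : Type*) [AddCommGroup E] [Module k E] [FiniteDimensional k E]
    (F : E →ₛₗ[frobenius k p] E)
    (V : E →ₛₗ[((frobeniusEquiv k p).symm : k →+* k)] E)
    (hFV : LinearMap.ker F = LinearMap.range V)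
    (hVF : LinearMap.ker V = LinearMap.range F)
    (hd0 : 0 < Module.finrank k (LinearMap.ker F))
    (hdE : Module.finrank k (LinearMap.ker F) < Module.finrank k E) :
    (∀ x ∈ LinearMap.ker F, V x ∈ LinearMap.ker F) ∧
    ∃ Fbar : (E ⧸ LinearMap.ker F) →+ (E ⧸ LinearMap.ker F),
      (∀ x : E, Fbar (Submodule.Quotient.mk x) = Submodule.Quotient.mk (F x)) ∧
      (Set.BijOn V (LinearMap.ker F : Set E) (LinearMap.ker F : Set E) ↔
        Function.Bijective Fbar) ∧
      (Set.BijOn V (LinearMap.ker F : Set E) (LinearMap.ker F : Set E) ↔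
        IsCompl (LinearMap.ker F) (LinearMap.range F)) := by
  set K := LinearMap.ker F with hKdef
  set R := LinearMap.range F with hRdef
  -- (i) V maps ker F into ker F (indeed into range V = ker F).
  have hmapsTo : ∀ x ∈ K, V x ∈ K := fun x _ => hFV ▸ LinearMap.mem_range_self V x
  refine ⟨hmapsTo, ?_⟩
  -- The induced map on the quotient.
  have hle : K ≤ K.comap F := by
    intro x hx
    have hx0 : F x = 0 := hx
    simp [Submodule.mem_comap, hx0]
  set Fb : (E ⧸ K) →ₛₗ[frobenius k p] (E ⧸ K) := Submodule.mapQ K K F hle with hFbdef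
  have hFb : ∀ x : E, Fb (Submodule.Quotient.mk x) = Submodule.Quotient.mk (F x) :=
    fun x => rfl
  -- Rank-nullity for the semilinear map F.
  have hfrobBij : Function.Bijective (frobenius k p) := by
    have := (frobeniusEquiv k p).bijective
    rwa [coe_frobeniusEquiv] at this
  have hrn : Module.finrank k R + Module.finrank k K = Module.finrank k E := by
    -- `E ⧸ K ≃ R` via the semilinear first isomorphism theorem
    set g : (E ⧸ K) →ₛₗ[frobenius k p] E := K.liftQ F le_rfl with hgdef
    have hginj : Function.Injective g :=
      LinearMap.ker_eq_bot.mp (Submodule.ker_liftQ_eq_bot K F le_rfl le_rfl)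
    have hgrange : LinearMap.range g = R := Submodule.range_liftQ K F le_rfl
    set g' : (E ⧸ K) →ₛₗ[frobenius k p] R :=
      LinearMap.codRestrict R g (fun c => hgrange ▸ LinearMap.mem_range_self g c) with hg'def
    have hg'bij : Function.Bijective g' := by
      constructor
      · intro a b hab
        exact hginj (congrArg Subtype.val hab)
      · rintro ⟨y, hy⟩
        obtain ⟨x, hx⟩ := hgrange.symm ▸ hy
        exact ⟨x, Subtype.ext hx⟩
    have hrank : Module.rank k (E ⧸ K) = Module.rank k R :=
      rank_eq_of_semilinear_bijective (frobenius k p) hfrobBij g' hg'bij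
    have hfr : Module.finrank k (E ⧸ K) = Module.finrank k R :=
      congrArg Cardinal.toNat hrank
    have := Submodule.finrank_quotient_add_finrank K
    omega
  -- The central condition: K ⊓ R = ⊥, and its equivalent K ⊔ R = ⊤.
  have hsup_of_inf : K ⊓ R = ⊥ → K ⊔ R = ⊤ := by
    intro hinf
    apply Submodule.eq_top_of_finrank_eq
    have h1 := Submodule.finrank_sup_add_finrank_inf_eq K R
    rw [hinf] at h1
    simp only [finrank_bot, add_zero] at h1
    omega
  have hinf_of_sup : K ⊔ R = ⊤ → K ⊓ R = ⊥ := by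
    intro hsup
    have h1 := Submodule.finrank_sup_add_finrank_inf_eq K R
    rw [hsup, finrank_top] at h1
    have h2 : Module.finrank k ↥(K ⊓ R) = 0 := by omega
    exact Submodule.finrank_eq_zero.mp h2
  -- BijOn V K K ↔ K ⊓ R = ⊥
  have hbij_iff : Set.BijOn V (K : Set E) (K : Set E) ↔ K ⊓ R = ⊥ := by
    constructor
    · intro hb
      rw [Submodule.eq_bot_iff]
      intro x hx
      obtain ⟨hxK, hxR⟩ := Submodule.mem_inf.mp hx
      have hVx : V x = 0 := by
        have : x ∈ LinearMap.ker V := by rw [hVF]; exact hxR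
        exact this
      have h0 : V (0 : E) = (0 : E) := map_zero V
      exact hb.injOn hxK (Submodule.zero_mem K) (by rw [hVx, h0])
    · intro hinf
      have hsup := hsup_of_inf hinf
      refine ⟨fun x hx => hmapsTo x hx, ?_, ?_⟩
      · intro x hx y hy hxy
        have : V (x - y) = 0 := by rw [map_sub, hxy, sub_self]
        have hmem : x - y ∈ K ⊓ R :=
          Submodule.mem_inf.mpr ⟨Submodule.sub_mem K hx hy, hVF ▸ this⟩
        rw [hinf, Submodule.mem_bot] at hmem
        exact sub_eq_zero.mp hmem
      · intro y hy
        have hyK : y ∈ K := hy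
        obtain ⟨z, hz⟩ := (hFV ▸ hyK : y ∈ LinearMap.range V)
        have hzmem : z ∈ K ⊔ R := hsup ▸ Submodule.mem_top
        obtain ⟨a, haK, b, hbR, hab⟩ := Submodule.mem_sup.mp hzmem
        have hVb : V b = 0 := by
          have : b ∈ LinearMap.ker V := by rw [hVF]; exact hbR
          exact this
        refine ⟨a, haK, ?_⟩
        calc V a = V a + V b := by rw [hVb, add_zero]
        _ = V (a + b) := (map_add V a b).symm
        _ = V z := by rw [hab]
        _ = y := hz
  -- Bijective Fb ↔ K ⊓ R = ⊥
  have hFbbij_iff : Function.Bijective Fb ↔ K ⊓ R = ⊥ := by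
    constructor
    · intro hFbb
      rw [Submodule.eq_bot_iff]
      intro x hx
      obtain ⟨hxK, hxR⟩ := Submodule.mem_inf.mp hx
      obtain ⟨y, hy⟩ := hxR
      have h1 : Fb (Submodule.Quotient.mk y) = 0 := by
        rw [hFb, hy]
        exact (Submodule.Quotient.mk_eq_zero K).mpr hxK
      have h2 : Fb (0 : E ⧸ K) = 0 := map_zero Fb
      have h3 : (Submodule.Quotient.mk y : E ⧸ K) = 0 := hFbb.injective (h1.trans h2.symm)
      have hyK : y ∈ K := (Submodule.Quotient.mk_eq_zero K).mp h3
      have : F y = 0 := hyK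
      rw [← hy, this]
    · intro hinf
      have hsup := hsup_of_inf hinf
      constructor
      · intro a b hab
        obtain ⟨x, rfl⟩ := Submodule.Quotient.mk_surjective K a
        obtain ⟨y, rfl⟩ := Submodule.Quotient.mk_surjective K b
        rw [hFb, hFb] at hab
        have hmem : F x - F y ∈ K := (Submodule.Quotient.eq K).mp hab
        have hsub : F (x - y) ∈ K := by rw [map_sub]; exact hmem
        have hsubR : F (x - y) ∈ R := LinearMap.mem_range_self F (x - y)
        have : F (x - y) ∈ K ⊓ R := Submodule.mem_inf.mpr ⟨hsub, hsubR⟩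
        rw [hinf, Submodule.mem_bot] at this
        have : x - y ∈ K := this
        exact (Submodule.Quotient.eq K).mpr this
      · intro y
        obtain ⟨z, rfl⟩ := Submodule.Quotient.mk_surjective K y
        have hzmem : z ∈ K ⊔ R := hsup ▸ Submodule.mem_top
        obtain ⟨a, haK, b, hbR, hab⟩ := Submodule.mem_sup.mp hzmem
        obtain ⟨w, hw⟩ := hbR
        refine ⟨Submodule.Quotient.mk w, ?_⟩
        rw [hFb, hw]
        rw [Submodule.Quotient.eq]
        have : b - z = -a := by rw [← hab]; abel
        rw [this]
        exact Submodule.neg_mem K haK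
  -- IsCompl K R ↔ K ⊓ R = ⊥
  have hcompl_iff : IsCompl K R ↔ K ⊓ R = ⊥ := by
    constructor
    · intro h
      exact disjoint_iff.mp h.disjoint
    · intro hinf
      exact ⟨disjoint_iff.mpr hinf, codisjoint_iff.mpr (hsup_of_inf hinf)⟩
  exact ⟨Fb.toAddMonoidHom, hFb, hbij_iff.trans hFbbij_iff.symm,
    hbij_iff.trans hcompl_iff.symm⟩
end

section
/- Let k be a perfect field of characteristic p > 0, f ≥ 1 an integer, and for each i ∈ ℤ/fℤ let E_i be a finite-dimensional k-vector space with dim_k E_i = h₀. For each i let F_i : E_{i−1} → E_i be an additive map with F_i(a·x) = a^p·F_i(x), and V_i : E_i → E_{i−1} an additive map with V_i(a^p·x) = a·V_i(x), for all a ∈ k. Assume that for every i: ker F_i = range V_i (as subspaces of E_{i−1}) and ker V_i = range F_i (as subspaces of E_i). Set ω_i := ker F_{i+1} ⊆ E_i, and assume dim_k ω_i = d₀ for all i, with 0 < d₀ < h₀. Then for each i: (i) V_i maps ω_i into ω_{i−1}, and F_i induces an additive map F̄_i : E_{i−1}/ω_{i−1} → E_i/ω_i; (ii) the restriction V_i|_{ω_i}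 : ω_i → ω_{i−1} is bijective if and only if F̄_i : E_{i−1}/ω_{i−1} → E_i/ω_i is bijective, and both conditions are equivalent to the internal direct sum decomposition E_i = ω_i ⊕ range F_i. (This is the compatibility of the i-th partial Hasse invariant with duality for a p-divisible group with unramified action: ha_i(G) is invertible exactly when ha_i(G^D) is.) -/
instance frobInvPair (k : Type*) [Field k] (p : ℕ) [Fact p.Prime] [CharP k p]
    [PerfectRing k p] :
    RingHomInvPair (frobenius k p) ((frobeniusEquiv k p).symm : k →+* k) :=
  ⟨by ext x; exact (frobeniusEquiv k p).symm_apply_apply x,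
   by ext x; exact (frobeniusEquiv k p).apply_symm_apply x⟩

instance frobInvPair' (k : Type*) [Field k] (p : ℕ) [Fact p.Prime] [CharP k p]
    [PerfectRing k p] :
    RingHomInvPair ((frobeniusEquiv k p).symm : k →+* k) (frobenius k p) :=
  ⟨by ext x; exact (frobeniusEquiv k p).apply_symm_apply x,
   by ext x; exact (frobeniusEquiv k p).symm_apply_apply x⟩

open Module Submodule LinearMap in
lemma finrank_le_of_semilinear_surjective {k : Type*} [Field k] {M N : Type*}
    [AddCommGroup M] [Module k M] [AddCommGroup N] [Module k N] [FiniteDimensional k M]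
    {σ : k →+* k} [RingHomSurjective σ] (g : M →ₛₗ[σ] N) (hg : Function.Surjective g) :
    finrank k N ≤ finrank k M := by
  classical
  have b := Module.finBasis k M
  have hsp : Submodule.span k (Set.range (g ∘ b)) = ⊤ := by
    rw [Set.range_comp, ← Submodule.map_span, b.span_eq, Submodule.map_top,
      LinearMap.range_eq_top.2 hg]
  simpa using finrank_le_of_span_eq_top hsp

open Module in
lemma finrank_eq_of_semilinear_equiv {k : Type*} [Field k] {M N : Type*}
    [AddCommGroup M] [Module k M] [AddCommGroup N] [Module k N]
    [FiniteDimensional k M] [FiniteDimensional k N]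
    {σ σ' : k →+* k} [RingHomInvPair σ σ'] [RingHomInvPair σ' σ]
    [RingHomSurjective σ] [RingHomSurjective σ'] (e : M ≃ₛₗ[σ] N) :
    finrank k M = finrank k N :=
  le_antisymm (finrank_le_of_semilinear_surjective (e.symm : N →ₛₗ[σ'] M) e.symm.surjective)
    (finrank_le_of_semilinear_surjective (e : M →ₛₗ[σ] N) e.surjective)

/-- **Compatibility of the partial Hasse invariants with duality (unramified action).**
For `i ∈ ℤ/fℤ`, let `E i` be `h₀`-dimensional `k`-vector spaces, with Frobenius-semilinear
maps `F i : E i → E (i+1)` (the map called `F_{i+1} : E_i → E_{i+1}` in the paper) and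
maps `V i : E (i+1) → E i` semilinear over the inverse of Frobenius (the map `V_{i+1}`),
satisfying `ker (F i) = range (V i)` and `ker (V i) = range (F i)`. Set
`ω i := ker (F i) ⊆ E i` (the Hodge filtration), and assume `dim ω i = d₀` with
`0 < d₀ < h₀`. Then for each `i`: (i) `V i` maps `ω (i+1)` into `ω i` and `F i` induces an
additive map `F̄ i : E i / ω i → E (i+1) / ω (i+1)`; (ii) the restriction
`V i : ω (i+1) → ω i` is bijective iff `F̄ i` is bijective, and both are equivalent to the
internal direct sum decomposition `E (i+1) = ω (i+1) ⊕ range (F i)`. -/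
theorem partial_hasse_invariant_duality_unramified
    (k : Type*) [Field k] (p : ℕ) [Fact p.Prime] [CharP k p] [PerfectRing k p]
    (f : ℕ) (hf : 1 ≤ f) (h₀ d₀ : ℕ) (hd0 : 0 < d₀) (hdh : d₀ < h₀)
    (E : ZMod f → Type*) [∀ i, AddCommGroup (E i)] [∀ i, Module k (E i)]
    [∀ i, FiniteDimensional k (E i)] (hE : ∀ i, Module.finrank k (E i) = h₀)
    (F : ∀ i : ZMod f, E i →ₛₗ[frobenius k p] E (i + 1))
    (V : ∀ i : ZMod f, E (i + 1) →ₛₗ[((frobeniusEquiv k p).symm : k →+* k)] E i)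
    (hFV : ∀ i, LinearMap.ker (F i) = LinearMap.range (V i))
    (hVF : ∀ i, LinearMap.ker (V i) = LinearMap.range (F i))
    (hω : ∀ i, Module.finrank k (LinearMap.ker (F i)) = d₀) :
    ∀ i : ZMod f,
      (∀ x ∈ LinearMap.ker (F (i + 1)), V i x ∈ LinearMap.ker (F i)) ∧
      ∃ Fbar : (E i ⧸ LinearMap.ker (F i)) →+ (E (i + 1) ⧸ LinearMap.ker (F (i + 1))),
        (∀ x : E i, Fbar (Submodule.Quotient.mk x) = Submodule.Quotient.mk (F i x)) ∧
        (Set.BijOn (V i) (LinearMap.ker (F (i + 1)) : Set (E (i + 1)))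
            (LinearMap.ker (F i) : Set (E i)) ↔ Function.Bijective Fbar) ∧
        (Set.BijOn (V i) (LinearMap.ker (F (i + 1)) : Set (E (i + 1)))
            (LinearMap.ker (F i) : Set (E i)) ↔
          IsCompl (LinearMap.ker (F (i + 1))) (LinearMap.range (F i))) := by
  classical
  intro i
  set ω₁ := LinearMap.ker (F i)
  set ω₂ := LinearMap.ker (F (i + 1))
  set R := LinearMap.range (F i)
  -- part (i) first half
  have hmaps : ∀ x ∈ ω₂, V i x ∈ ω₁ := by
    intro x _
    rw [show ω₁ = LinearMap.range (V i) from hFV i]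
    exact ⟨x, rfl⟩
  refine ⟨hmaps, ?_⟩
  -- the induced map on quotients
  have hle : ω₁ ≤ ω₂.comap (F i) := by
    intro x hx
    have hx' : F i x = 0 := hx
    simp only [Submodule.mem_comap, LinearMap.mem_ker, hx', map_zero]
    exact Submodule.zero_mem ω₂
  set Fb : (E i ⧸ ω₁) →ₛₗ[frobenius k p] (E (i + 1) ⧸ ω₂) :=
    Submodule.mapQ ω₁ ω₂ (F i) hle with hFbdef
  have hFbmk : ∀ x : E i, Fb (Submodule.Quotient.mk x) = Submodule.Quotient.mk (F i x) :=
    fun x => Submodule.mapQ_apply ω₁ ω₂ (F i) x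
  -- dimension bookkeeping
  have hd₁ : Module.finrank k ω₁ = d₀ := hω i
  have hd₂ : Module.finrank k ω₂ = d₀ := hω (i + 1)
  have hQ₁ : Module.finrank k (E i ⧸ ω₁) = h₀ - d₀ := by
    have := Submodule.finrank_quotient_add_finrank ω₁
    rw [hd₁, hE i] at this
    omega
  have hQ₂ : Module.finrank k (E (i + 1) ⧸ ω₂) = h₀ - d₀ := by
    have := Submodule.finrank_quotient_add_finrank ω₂
    rw [hd₂, hE (i + 1)] at this
    omega
  have hR : Module.finrank k R = h₀ - d₀ := by
    set Fc : E i →ₛₗ[frobenius k p] R :=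
      (F i).codRestrict R (fun x => LinearMap.mem_range_self (F i) x) with hFc
    have hker : ω₁ ≤ LinearMap.ker Fc := by
      intro x hx
      exact Subtype.ext (show F i x = 0 from hx)
    set q : (E i ⧸ ω₁) →ₛₗ[frobenius k p] R := Submodule.liftQ ω₁ Fc hker with hq
    have hqinj : Function.Injective q := by
      rw [← LinearMap.ker_eq_bot]
      apply Submodule.ker_liftQ_eq_bot
      intro x hx
      exact (show F i x = 0 from congrArg Subtype.val hx)
    have hqsurj : Function.Surjective q := by
      rintro ⟨y, x, rfl⟩
      exact ⟨Submodule.Quotient.mk x, rfl⟩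
    have := finrank_eq_of_semilinear_equiv (σ' := ((frobeniusEquiv k p).symm : k →+* k))
      (LinearEquiv.ofBijective q ⟨hqinj, hqsurj⟩)
    rw [hQ₁] at this
    exact this.symm
  -- the central disjointness condition
  -- Fb injective ↔ disjoint
  have hinj_iff : Function.Injective Fb ↔ Disjoint ω₂ R := by
    constructor
    · intro hinj
      rw [Submodule.disjoint_def]
      rintro y hy ⟨x, rfl⟩
      have h1 : Fb (Submodule.Quotient.mk x) = 0 := by
        rw [hFbmk]
        exact (Submodule.Quotient.mk_eq_zero _).2 hy
      have h2 : (Submodule.Quotient.mk x : E i ⧸ ω₁) = 0 := by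
        apply hinj
        rw [h1, map_zero]
      have h3 : x ∈ ω₁ := (Submodule.Quotient.mk_eq_zero _).1 h2
      exact h3
    · intro hD
      rw [← LinearMap.ker_eq_bot, eq_bot_iff]
      intro q hq
      obtain ⟨x, rfl⟩ := Submodule.Quotient.mk_surjective _ q
      have hq' : (Submodule.Quotient.mk (F i x) : E (i + 1) ⧸ ω₂) = 0 := by
        rw [← hFbmk]; exact hq
      have hx2 : F i x ∈ ω₂ := (Submodule.Quotient.mk_eq_zero _).1 hq'
      have hx0 : F i x = 0 := (Submodule.disjoint_def.1 hD) _ hx2 ⟨x, rfl⟩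
      exact (Submodule.mem_bot _).2 ((Submodule.Quotient.mk_eq_zero _).2 hx0)
  -- Fb injective → bijective
  have hinj_bij : Function.Injective Fb → Function.Bijective Fb := by
    intro hinj
    refine ⟨hinj, ?_⟩
    rw [← LinearMap.range_eq_top]
    apply Submodule.eq_top_of_finrank_eq
    have := finrank_eq_of_semilinear_equiv (σ' := ((frobeniusEquiv k p).symm : k →+* k))
      (LinearEquiv.ofInjective Fb hinj)
    rw [hQ₁] at this
    rw [← this, hQ₂]
  -- BijOn ↔ disjoint
  have hbijOn_iff : Set.BijOn (V i) (ω₂ : Set (E (i + 1))) (ω₁ : Set (E i)) ↔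
      Disjoint ω₂ R := by
    constructor
    · intro hb
      rw [Submodule.disjoint_def]
      intro x hx2 hxR
      have hxker : x ∈ LinearMap.ker (V i) := by rw [hVF i]; exact hxR
      have hVx : V i x = V i 0 := by
        rw [map_zero]; exact hxker
      exact hb.injOn hx2 (Submodule.zero_mem ω₂) hVx
    · intro hD
      have hinjOn : Set.InjOn (V i) (ω₂ : Set (E (i + 1))) := by
        intro x hx y hy hxy
        have hsub : x - y ∈ LinearMap.ker (V i) := by
          rw [LinearMap.mem_ker, map_sub, hxy, sub_self]
        rw [hVF i] at hsub
        have h0 : x - y = 0 :=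
          (Submodule.disjoint_def.1 hD) _ (Submodule.sub_mem ω₂ hx hy) hsub
        exact sub_eq_zero.1 h0
      refine ⟨fun x hx => hmaps x hx, hinjOn, ?_⟩
      -- surjectivity via dimensions
      set g := (V i).domRestrict ω₂ with hg
      have hginj : Function.Injective g := by
        intro a b hab
        exact Subtype.ext (hinjOn a.2 b.2 hab)
      have hrange : LinearMap.range g = Submodule.map (V i) ω₂ := by
        ext y
        constructor
        · rintro ⟨⟨x, hx⟩, rfl⟩
          exact ⟨x, hx, rfl⟩
        · rintro ⟨x, hx, rfl⟩
          exact ⟨⟨x, hx⟩, rfl⟩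
      have hmapfr : Module.finrank k (Submodule.map (V i) ω₂) = d₀ := by
        have := finrank_eq_of_semilinear_equiv (σ' := frobenius k p)
          (LinearEquiv.ofInjective g hginj)
        rw [hd₂, hrange] at this
        exact this.symm
      have hmaple : Submodule.map (V i) ω₂ ≤ ω₁ := by
        rintro y ⟨x, _, rfl⟩
        rw [show ω₁ = LinearMap.range (V i) from hFV i]
        exact ⟨x, rfl⟩
      have hmapeq : Submodule.map (V i) ω₂ = ω₁ :=
        Submodule.eq_of_le_of_finrank_le hmaple (by rw [hmapfr, hd₁])
      intro y hy
      rw [← hmapeq] at hy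
      obtain ⟨x, hx, rfl⟩ := hy
      exact ⟨x, hx, rfl⟩
  -- IsCompl ↔ disjoint
  have hcompl_iff : IsCompl ω₂ R ↔ Disjoint ω₂ R := by
    constructor
    · exact fun h => h.disjoint
    · intro hD
      refine ⟨hD, ?_⟩
      rw [codisjoint_iff]
      apply Submodule.eq_top_of_finrank_eq
      have hsum := Submodule.finrank_sup_add_finrank_inf_eq ω₂ R
      rw [disjoint_iff.1 hD] at hsum
      simp only [finrank_bot, add_zero] at hsum
      rw [hsum, hd₂, hR, hE (i + 1)]
      omega
  refine ⟨Fb.toAddMonoidHom, hFbmk, ?_, ?_⟩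
  · rw [hbijOn_iff]
    have : Function.Bijective Fb.toAddMonoidHom ↔ Function.Bijective Fb := Iff.rfl
    rw [this]
    constructor
    · intro hD
      exact hinj_bij (hinj_iff.2 hD)
    · intro hb
      exact hinj_iff.1 hb.1
  · rw [hbijOn_iff, hcompl_iff]
end

section
/- Let R be a nontrivial commutative ring, e ≥ 1 an integer, A := R[X]/(X^e), and let π denote the image of X in A. Let M be a finite free A-module of rank m, and for 0 ≤ j ≤ e let M[π^j] denote the kernel of multiplication by π^j on M. Then for every 0 ≤ j ≤ e: (i) M[π^j] = π^{e−j}·M; (ii) multiplication by π^j induces an A-module isomorphism M/M[π^j] ≅ M[π^{e−j}] (the inverse of this isomorphism is called division by π^j); (iii) M[π^j] is a direct summand of M as an R-module, and is a finite free R-module of rank j·m. -/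
/-- The ring `A = R[X]/(X^e)`. -/
abbrev TruncPoly (R : Type*) [CommRing R] (e : ℕ) : Type _ :=
  Polynomial R ⧸ Ideal.span {(Polynomial.X : Polynomial R) ^ e}

/-- The image `π` of `X` in `A = R[X]/(X^e)`. -/
noncomputable def piX (R : Type*) [CommRing R] (e : ℕ) : TruncPoly R e :=
  Ideal.Quotient.mk _ Polynomial.X

lemma piX_pow_self (R : Type*) [CommRing R] (e : ℕ) : piX R e ^ e = 0 := by
  rw [piX, ← map_pow, Ideal.Quotient.eq_zero_iff_mem]
  exact Ideal.subset_span rfl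

lemma piX_pow_of_le (R : Type*) [CommRing R] (e : ℕ) {n : ℕ} (h : e ≤ n) : piX R e ^ n = 0 := by
  rw [← Nat.add_sub_cancel' h, pow_add, piX_pow_self, zero_mul]

lemma piX_pow_smul_smul (R : Type*) [CommRing R] (e : ℕ) (M : Type*) [AddCommGroup M]
    [Module (TruncPoly R e) M] (n k : ℕ) (x : M) :
    piX R e ^ n • piX R e ^ k • x = piX R e ^ (n + k) • x := by
  rw [smul_smul, ← pow_add]

lemma piX_pow_smul_zero (R : Type*) [CommRing R] (e : ℕ) (M : Type*) [AddCommGroup M]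
    [Module (TruncPoly R e) M] (n : ℕ) (h : e ≤ n) (x : M) :
    piX R e ^ n • x = 0 := by
  rw [piX_pow_of_le R e h]
  exact zero_smul (TruncPoly R e) x

open Polynomial in
lemma piX_ann (R : Type*) [CommRing R] (e : ℕ) {j : ℕ} (hj : j ≤ e) {a : TruncPoly R e}
    (h : piX R e ^ j * a = 0) : ∃ b, piX R e ^ (e - j) * b = a := by
  obtain ⟨p, rfl⟩ := Ideal.Quotient.mk_surjective a
  rw [piX, ← map_pow, ← map_mul, Ideal.Quotient.eq_zero_iff_mem,
    Ideal.mem_span_singleton, Polynomial.X_pow_dvd_iff] at h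
  have hd : (X : R[X]) ^ (e - j) ∣ p := by
    rw [Polynomial.X_pow_dvd_iff]
    intro d hd
    have := h (d + j) (by omega)
    rwa [Polynomial.coeff_X_pow_mul] at this
  obtain ⟨q, rfl⟩ := hd
  exact ⟨Ideal.Quotient.mk _ q, by rw [piX, ← map_pow, ← map_mul]⟩

open Polynomial in
lemma truncPoly_nontrivial (R : Type*) [CommRing R] [Nontrivial R] (e : ℕ) (he : 1 ≤ e) :
    Nontrivial (TruncPoly R e) := by
  refine Ideal.Quotient.nontrivial_iff.mpr ?_
  rw [Ne, Ideal.span_singleton_eq_top]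
  rintro h
  obtain ⟨g, hg⟩ := h.exists_right_inv
  have h0 : (Polynomial.X ^ e * g).coeff 0 = (1 : R[X]).coeff 0 := by rw [hg]
  rw [Polynomial.coeff_X_pow_mul', if_neg (by omega), Polynomial.coeff_one, if_pos rfl] at h0
  exact zero_ne_one h0

/-- **Structure of `π`-torsion in a finite free module over `R[X]/(X^e)`.**
Let `A = R[X]/(X^e)` with `e ≥ 1`, `π` the image of `X`, and `M` a finite free `A`-module of
rank `m`. Write `M[π^j]` for the kernel of multiplication by `π^j`. Then for `0 ≤ j ≤ e`:
(i) `M[π^j] = π^{e-j}·M`;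
(ii) multiplication by `π^j` induces an `A`-module isomorphism `M/M[π^j] ≅ M[π^{e-j}]`;
(iii) `M[π^j]` is an `R`-module direct summand of `M` and is finite free over `R` of
rank `j·m`. -/
theorem pi_torsion_finite_free_module
    (R : Type*) [CommRing R] [Nontrivial R] (e : ℕ) (he : 1 ≤ e) (m : ℕ)
    (M : Type*) [AddCommGroup M] [Module (TruncPoly R e) M] [Module R M]
    [IsScalarTower R (TruncPoly R e) M]
    [Module.Finite (TruncPoly R e) M] [Module.Free (TruncPoly R e) M]
    (hrank : Module.finrank (TruncPoly R e) M = m)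
    (j : ℕ) (hj : j ≤ e) :
    LinearMap.ker (LinearMap.lsmul (TruncPoly R e) M (piX R e ^ j)) =
        LinearMap.range (LinearMap.lsmul (TruncPoly R e) M (piX R e ^ (e - j))) ∧
    (∃ φ : (M ⧸ LinearMap.ker (LinearMap.lsmul (TruncPoly R e) M (piX R e ^ j))) ≃ₗ[TruncPoly R e]
        LinearMap.ker (LinearMap.lsmul (TruncPoly R e) M (piX R e ^ (e - j))),
      ∀ x : M, (φ (Submodule.Quotient.mk x) : M) = piX R e ^ j • x) ∧
    (∃ q : Submodule R M,
      IsCompl ((LinearMap.ker (LinearMap.lsmul (TruncPoly R e) M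
        (piX R e ^ j))).restrictScalars R) q) ∧
    Module.Finite R (LinearMap.ker (LinearMap.lsmul (TruncPoly R e) M (piX R e ^ j))) ∧
    Module.Free R (LinearMap.ker (LinearMap.lsmul (TruncPoly R e) M (piX R e ^ j))) ∧
    Module.finrank R (LinearMap.ker (LinearMap.lsmul (TruncPoly R e) M (piX R e ^ j))) = j * m := by
  haveI : Nontrivial (TruncPoly R e) := truncPoly_nontrivial R e he
  let b : Module.Basis (Fin m) (TruncPoly R e) M := Module.finBasisOfFinrankEq (TruncPoly R e) M hrank
  -- Part (i), for all exponents
  have key : ∀ k, k ≤ e → LinearMap.ker (LinearMap.lsmul (TruncPoly R e) M (piX R e ^ k)) =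
      LinearMap.range (LinearMap.lsmul (TruncPoly R e) M (piX R e ^ (e - k))) := by
    intro k hk
    ext x
    simp only [LinearMap.mem_ker, LinearMap.mem_range, LinearMap.lsmul_apply]
    constructor
    · intro hx
      have hcomp : ∀ i, piX R e ^ k * b.equivFun x i = 0 := by
        intro i
        have h0 : b.equivFun (piX R e ^ k • x) = 0 := by rw [hx, map_zero]
        calc piX R e ^ k * b.equivFun x i = b.equivFun (piX R e ^ k • x) i := by
              rw [map_smul]; rfl
          _ = 0 := by rw [h0]; rfl
      choose c hc using fun i => piX_ann R e hk (hcomp i)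
      refine ⟨b.equivFun.symm c, ?_⟩
      apply b.equivFun.injective
      rw [map_smul, LinearEquiv.apply_symm_apply]
      funext i
      simpa using hc i
    · rintro ⟨y, rfl⟩
      rw [piX_pow_smul_smul]
      exact piX_pow_smul_zero R e M _ (by omega) y
  have h1 := key j hj
  have h2 : LinearMap.ker (LinearMap.lsmul (TruncPoly R e) M (piX R e ^ (e - j))) =
      LinearMap.range (LinearMap.lsmul (TruncPoly R e) M (piX R e ^ j)) := by
    have := key (e - j) (Nat.sub_le e j)
    rwa [Nat.sub_sub_self hj] at this
  -- the R-basis of TruncPoly R e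
  let bA : Module.Basis (Fin e) R (TruncPoly R e) :=
    (AdjoinRoot.powerBasis' (Polynomial.monic_X_pow (R := R) e)).basis.reindex
      (finCongr (by simp))
  have hbA : ∀ i : Fin e, bA i = piX R e ^ (i : ℕ) := by
    intro i
    show ((AdjoinRoot.powerBasis' (Polynomial.monic_X_pow (R := R) e)).basis.reindex
      (finCongr (by simp))) i = _
    rw [Module.Basis.reindex_apply, PowerBasis.coe_basis]
    rfl
  let B : Module.Basis (Fin e × Fin m) R M := bA.smulTower b
  have hB : ∀ p : Fin e × Fin m, B p = piX R e ^ (p.1 : ℕ) • b p.2 := by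
    intro p
    simp only [B, Module.Basis.smulTower_apply, hbA]
  let emb1 : Fin j × Fin m → Fin e × Fin m := fun p => (⟨e - j + p.1, by omega⟩, p.2)
  let emb2 : Fin (e - j) × Fin m → Fin e × Fin m := fun p => (⟨p.1, by omega⟩, p.2)
  have hemb1 : Function.Injective emb1 := by
    intro p q h
    have h1' : e - j + (p.1 : ℕ) = e - j + (q.1 : ℕ) :=
      congrArg (fun x : Fin e × Fin m => (x.1 : ℕ)) h
    have h2' : p.2 = q.2 := congrArg (fun x : Fin e × Fin m => x.2) h
    exact Prod.ext_iff.mpr ⟨Fin.ext (by omega), h2'⟩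
  let v : Fin j × Fin m → M := ⇑B ∘ emb1
  have hv : ∀ p : Fin j × Fin m, v p = piX R e ^ (e - j + (p.1 : ℕ)) • b p.2 := by
    intro p; rw [show v p = B (emb1 p) from rfl, hB]
  have hker_span :
      (LinearMap.ker (LinearMap.lsmul (TruncPoly R e) M (piX R e ^ j))).restrictScalars R =
      Submodule.span R (Set.range v) := by
    apply le_antisymm
    · intro x hx
      rw [Submodule.restrictScalars_mem, h1, LinearMap.mem_range] at hx
      obtain ⟨y, hy⟩ := hx
      rw [LinearMap.lsmul_apply] at hy
      rw [← hy, ← B.sum_repr y, Finset.smul_sum]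
      apply Submodule.sum_mem
      intro p _
      rw [smul_comm, hB, piX_pow_smul_smul]
      apply Submodule.smul_mem
      by_cases hik : ((p.1 : ℕ)) < j
      · exact Submodule.subset_span ⟨((⟨(p.1 : ℕ), hik⟩ : Fin j), p.2), hv _⟩
      · rw [piX_pow_smul_zero R e M _ (by omega) (b p.2)]
        exact zero_mem _
    · rw [Submodule.span_le]
      rintro _ ⟨p, rfl⟩
      rw [SetLike.mem_coe, Submodule.restrictScalars_mem, LinearMap.mem_ker,
        LinearMap.lsmul_apply, hv, piX_pow_smul_smul]
      exact piX_pow_smul_zero R e M _ (by omega) (b p.2)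
  have hli : LinearIndependent R v := B.linearIndependent.comp emb1 hemb1
  let bs : Module.Basis (Fin j × Fin m) R (Submodule.span R (Set.range v)) := Module.Basis.span hli
  let eK : (Submodule.span R (Set.range v)) ≃ₗ[R]
      (LinearMap.ker (LinearMap.lsmul (TruncPoly R e) M (piX R e ^ j))) :=
    (LinearEquiv.ofEq _ _ hker_span.symm).trans
      ((Submodule.restrictScalarsEquiv R (TruncPoly R e) M
        (LinearMap.ker (LinearMap.lsmul (TruncPoly R e) M (piX R e ^ j)))).restrictScalars R)
  let bK : Module.Basis (Fin j × Fin m) R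
      (LinearMap.ker (LinearMap.lsmul (TruncPoly R e) M (piX R e ^ j))) := bs.map eK
  refine ⟨h1, ⟨(LinearMap.quotKerEquivRange
        (LinearMap.lsmul (TruncPoly R e) M (piX R e ^ j))).trans
      (LinearEquiv.ofEq _ _ h2.symm), fun x => ?_⟩, ⟨Submodule.span R (Set.range (⇑B ∘ emb2)), ?_⟩,
      Module.Finite.of_basis bK, Module.Free.of_basis bK, ?_⟩
  · simp [LinearEquiv.trans_apply, LinearMap.quotKerEquivRange_apply_mk]
  · rw [hker_span]
    have hrv : Set.range v = ⇑B '' Set.range emb1 := Set.range_comp ⇑B emb1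
    have hrw : Set.range (⇑B ∘ emb2) = ⇑B '' Set.range emb2 := Set.range_comp ⇑B emb2
    constructor
    · rw [hrv, hrw]
      refine B.linearIndependent.disjoint_span_image ?_
      rw [Set.disjoint_left]
      rintro _ ⟨p, rfl⟩ ⟨q, hc⟩
      have hc1 : (q.1 : ℕ) = e - j + (p.1 : ℕ) :=
        congrArg (fun x : Fin e × Fin m => (x.1 : ℕ)) hc
      have := q.1.isLt
      omega
    · rw [codisjoint_iff, ← Submodule.span_union]
      have hU : Set.range v ∪ Set.range (⇑B ∘ emb2) = Set.range ⇑B := by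
        apply Set.Subset.antisymm
        · exact Set.union_subset (Set.range_comp_subset_range emb1 ⇑B)
            (Set.range_comp_subset_range emb2 ⇑B)
        · rintro _ ⟨p, rfl⟩
          by_cases hik : (p.1 : ℕ) < e - j
          · right
            refine ⟨((⟨(p.1 : ℕ), hik⟩ : Fin (e - j)), p.2), ?_⟩
            show B _ = B p
            exact congrArg ⇑B (Prod.ext_iff.mpr ⟨Fin.ext rfl, rfl⟩)
          · left
            refine ⟨((⟨(p.1 : ℕ) - (e - j), by omega⟩ : Fin j), p.2), ?_⟩
            rw [hv]
            show piX R e ^ (e - j + ((p.1 : ℕ) - (e - j))) • b p.2 = B p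
            rw [show e - j + ((p.1 : ℕ) - (e - j)) = (p.1 : ℕ) from by omega, hB]
      rw [hU, B.span_eq]
  · rw [Module.finrank_eq_card_basis bK, Fintype.card_prod, Fintype.card_fin, Fintype.card_fin]
end

section
/- Let R be a commutative ring, e ≥ 2 an integer, A := R[X]/(X^e), π the image of X, E a finite free A-module of rank h₁, and let 0 = F^{[0]} ⊆ F^{[1]} ⊆ ⋯ ⊆ F^{[e]} be a Pappas–Rapoport filtration of rank d₁ on E, with 0 < d₁ < h₁. For 1 ≤ j ≤ e set F^{[e+j]} := {x ∈ E : π^j·x ∈ F^{[e−j]}}. Then for every 1 ≤ j ≤ e: (i) E[π^j] ⊆ F^{[e+j]}; (ii) π^j·F^{[e+j]} = F^{[e−j]}; (iii) multiplication by π^j induces an R-module isomorphism F^{[e+j]}/E[π^j] ≅ F^{[e−j]}; in other words there is a short exact sequence of R-modules 0 → E[π^j] → F^{[e+j]} → F^{[e−j]} → 0 where the second map is multiplication by π^j. -/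
/-- Multiplication by `π^k`, as an `R`-linear endomorphism of a module over `R[X]/(X^e)`. -/
noncomputable def mulPi (R : Type*) [CommRing R] (e : ℕ)
    (E : Type*) [AddCommGroup E] [Module (TruncPoly R e) E] [Module R E]
    [IsScalarTower R (TruncPoly R e) E] (k : ℕ) : E →ₗ[R] E :=
  (LinearMap.lsmul (TruncPoly R e) E (piX R e ^ k)).restrictScalars R

/-- A Pappas–Rapoport filtration of rank `d₁` on a module `E` over `A = R[X]/(X^e)`:
a chain of `R`-submodules `0 = F^{[0]} ⊆ F^{[1]} ⊆ ⋯ ⊆ F^{[e]}` of `E` such that each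
`F^{[j]}` is an `R`-module direct summand of `E`, each quotient `F^{[j]}/F^{[j-1]}` is a
finite free `R`-module of rank `d₁`, and `π·F^{[j]} ⊆ F^{[j-1]}` for `1 ≤ j ≤ e`. -/
def IsPRFiltration (R : Type*) [CommRing R] (e : ℕ)
    (E : Type*) [AddCommGroup E] [Module (TruncPoly R e) E] [Module R E]
    [IsScalarTower R (TruncPoly R e) E] (d₁ : ℕ) (F : ℕ → Submodule R E) : Prop :=
  F 0 = ⊥ ∧
  (∀ j < e, F j ≤ F (j + 1)) ∧
  (∀ j ≤ e, ∃ q : Submodule R E, IsCompl (F j) q) ∧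
  (∀ j < e,
    Module.Finite R (↥(F (j + 1)) ⧸ (F j).comap (F (j + 1)).subtype) ∧
    Module.Free R (↥(F (j + 1)) ⧸ (F j).comap (F (j + 1)).subtype) ∧
    Module.finrank R (↥(F (j + 1)) ⧸ (F j).comap (F (j + 1)).subtype) = d₁) ∧
  (∀ j < e, ∀ x ∈ F (j + 1), piX R e • x ∈ F j)

/-- The member `F^{[e+j]} := {x ∈ E : π^j·x ∈ F^{[e-j]}}` of the extended
(dual) Pappas–Rapoport filtration. -/
noncomputable def PRext (R : Type*) [CommRing R] (e : ℕ)
    (E : Type*) [AddCommGroup E] [Module (TruncPoly R e) E] [Module R E]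
    [IsScalarTower R (TruncPoly R e) E] (F : ℕ → Submodule R E) (j : ℕ) : Submodule R E :=
  (F (e - j)).comap (mulPi R e E j)

/-- The submodule `F'^{[j]} := {x ∈ E : π·x ∈ F^{[j]}}`. -/
noncomputable def PRdiv (R : Type*) [CommRing R] (e : ℕ)
    (E : Type*) [AddCommGroup E] [Module (TruncPoly R e) E] [Module R E]
    [IsScalarTower R (TruncPoly R e) E] (F : ℕ → Submodule R E) (j : ℕ) : Submodule R E :=
  (F j).comap (mulPi R e E 1)

section Aux

variable {R : Type*} [CommRing R] {e : ℕ}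

/-- In `A = R[X]/(X^e)`, if `π^m * a = 0` with `m ≤ e`, then `a` is divisible by `π^(e-m)`. -/
lemma piX_pow_dvd_of_pow_mul_eq_zero {m : ℕ} (hm : m ≤ e) {a : TruncPoly R e}
    (ha : piX R e ^ m * a = 0) : ∃ d : TruncPoly R e, piX R e ^ (e - m) * d = a := by
  obtain ⟨f, rfl⟩ := Ideal.Quotient.mk_surjective a
  have h1 : (Ideal.Quotient.mk (Ideal.span {(Polynomial.X : Polynomial R) ^ e}))
      (Polynomial.X ^ m * f) = 0 := by
    rw [map_mul, map_pow]; exact ha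
  rw [Ideal.Quotient.eq_zero_iff_mem, Ideal.mem_span_singleton] at h1
  obtain ⟨g, hg⟩ := h1
  have hX : (Polynomial.X : Polynomial R) ^ e = Polynomial.X ^ m * Polynomial.X ^ (e - m) := by
    rw [← pow_add, Nat.add_sub_cancel' hm]
  rw [hX, mul_assoc] at hg
  have hreg : IsRegular ((Polynomial.X : Polynomial R) ^ m) :=
    (Polynomial.monic_X_pow m).isRegular
  have hf : f = Polynomial.X ^ (e - m) * g := hreg.left hg
  exact ⟨Ideal.Quotient.mk _ g, by rw [hf, map_mul, map_pow]; rfl⟩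

variable {E : Type*} [AddCommGroup E] [Module (TruncPoly R e) E] [Module R E]
    [IsScalarTower R (TruncPoly R e) E]

/-- In a finite free module over `A`, elements killed by `π^m` are divisible by `π^(e-m)`. -/
lemma exists_smul_eq_of_pow_smul_eq_zero [Module.Finite (TruncPoly R e) E]
    [Module.Free (TruncPoly R e) E] {m : ℕ} (hm : m ≤ e) {y : E}
    (hy : piX R e ^ m • y = 0) : ∃ x : E, piX R e ^ (e - m) • x = y := by
  let b := Module.Free.chooseBasis (TruncPoly R e) E
  have hc : ∀ i, piX R e ^ m * b.repr y i = 0 := by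
    intro i
    have := congrArg (fun z => b.repr z i) hy
    simpa using this
  choose d hd using fun i => piX_pow_dvd_of_pow_mul_eq_zero hm (hc i)
  refine ⟨∑ i, d i • b i, ?_⟩
  rw [Finset.smul_sum]
  calc ∑ i, piX R e ^ (e - m) • d i • b i = ∑ i, b.repr y i • b i := by
        refine Finset.sum_congr rfl fun i _ => ?_
        rw [smul_smul, hd i]
      _ = y := b.sum_repr y

/-- Elements of `F k` are killed by `π^k`. -/
lemma pow_smul_eq_zero_of_mem {d₁ : ℕ} {F : ℕ → Submodule R E}
    (hF : IsPRFiltration R e E d₁ F) : ∀ k ≤ e, ∀ x ∈ F k, piX R e ^ k • x = 0 := by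
  intro k
  induction k with
  | zero => intro _ x hx; rw [hF.1, Submodule.mem_bot] at hx; simp [hx]
  | succ n ih =>
    intro hn x hx
    have h1 : piX R e • x ∈ F n := hF.2.2.2.2 n (by omega) x hx
    have := ih (by omega) _ h1
    rw [pow_succ, mul_smul]
    exact this

lemma mulPi_apply (k : ℕ) (x : E) : mulPi R e E k x = piX R e ^ k • x := rfl

/-- Statement (ii): `π^j · F^{[e+j]} = F^{[e-j]}`. -/
lemma map_mulPi_PRext (R : Type*) [CommRing R] (e : ℕ) (h₁ d₁ : ℕ)
    (E : Type*) [AddCommGroup E] [Module (TruncPoly R e) E] [Module R E]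
    [IsScalarTower R (TruncPoly R e) E]
    [Module.Finite (TruncPoly R e) E] [Module.Free (TruncPoly R e) E]
    (hrank : Module.finrank (TruncPoly R e) E = h₁)
    (F : ℕ → Submodule R E) (hF : IsPRFiltration R e E d₁ F)
    (j : ℕ) (hje : j ≤ e) :
    Submodule.map (mulPi R e E j) (PRext R e E F j) = F (e - j) := by
  apply le_antisymm
  · rintro _ ⟨x, hx, rfl⟩; exact hx
  · intro y hy
    have h0 : piX R e ^ (e - j) • y = 0 :=
      pow_smul_eq_zero_of_mem hF (e - j) (by omega) y hy
    obtain ⟨x, hx⟩ := exists_smul_eq_of_pow_smul_eq_zero (m := e - j) (by omega) h0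
    rw [(by omega : e - (e - j) = j)] at hx
    refine ⟨x, ?_, hx⟩
    show mulPi R e E j x ∈ F (e - j)
    rw [mulPi_apply, hx]; exact hy

end Aux

/-- **Multiplication by `π^j` on the dual Pappas–Rapoport filtration.**
With `F^{[e+j]} := {x ∈ E : π^j·x ∈ F^{[e-j]}}`, for every `1 ≤ j ≤ e`:
(i) `E[π^j] ⊆ F^{[e+j]}`;
(ii) `π^j·F^{[e+j]} = F^{[e-j]}`;
(iii) multiplication by `π^j` induces an `R`-module isomorphism `F^{[e+j]}/E[π^j] ≅ F^{[e-j]}`;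
equivalently, `0 → E[π^j] → F^{[e+j]} → F^{[e-j]} → 0` is a short exact sequence, the second
map being multiplication by `π^j`. -/
theorem pappas_rapoport_dual_filtration_pi_power
    (R : Type*) [CommRing R] (e : ℕ) (he : 2 ≤ e) (h₁ d₁ : ℕ)
    (hd : 0 < d₁) (hdh : d₁ < h₁)
    (E : Type*) [AddCommGroup E] [Module (TruncPoly R e) E] [Module R E]
    [IsScalarTower R (TruncPoly R e) E]
    [Module.Finite (TruncPoly R e) E] [Module.Free (TruncPoly R e) E]
    (hrank : Module.finrank (TruncPoly R e) E = h₁)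
    (F : ℕ → Submodule R E) (hF : IsPRFiltration R e E d₁ F)
    (j : ℕ) (hj1 : 1 ≤ j) (hje : j ≤ e) :
    LinearMap.ker (mulPi R e E j) ≤ PRext R e E F j ∧
    Submodule.map (mulPi R e E j) (PRext R e E F j) = F (e - j) ∧
    ∃ φ : (↥(PRext R e E F j) ⧸
        (LinearMap.ker (mulPi R e E j)).comap (PRext R e E F j).subtype) ≃ₗ[R] F (e - j),
      ∀ x : PRext R e E F j,
        (φ (Submodule.Quotient.mk x) : E) = piX R e ^ j • (x : E) := by
  
  refine ⟨?_, ?_, ?_⟩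
  · intro x hx
    rw [LinearMap.mem_ker] at hx
    show mulPi R e E j x ∈ F (e - j)
    rw [hx]; exact Submodule.zero_mem _
  · exact map_mulPi_PRext R e h₁ d₁ E hrank F hF j hje
  · set ψ : ↥(PRext R e E F j) →ₗ[R] ↥(F (e - j)) :=
      LinearMap.codRestrict (F (e - j)) ((mulPi R e E j).comp (PRext R e E F j).subtype)
        (fun x => x.2) with hψdef
    have hker : LinearMap.ker ψ
        = (LinearMap.ker (mulPi R e E j)).comap (PRext R e E F j).subtype := by
      rw [hψdef]; exact (LinearMap.ker_codRestrict _ _ _).trans (LinearMap.ker_comp _ _)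
    have hsurj : Function.Surjective ψ := by
      rintro ⟨y, hy⟩
      have hy' : y ∈ Submodule.map (mulPi R e E j) (PRext R e E F j) := by
        rw [map_mulPi_PRext R e h₁ d₁ E hrank F hF j hje]; exact hy
      obtain ⟨x, hx, hxy⟩ := hy'
      exact ⟨⟨x, hx⟩, Subtype.ext hxy⟩
    set g := Submodule.liftQ ((LinearMap.ker (mulPi R e E j)).comap
        (PRext R e E F j).subtype) ψ hker.ge with hgdef
    have hginj : Function.Injective g :=
      LinearMap.ker_eq_bot.mp (Submodule.ker_liftQ_eq_bot' _ _ hker.symm)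
    have hgsurj : Function.Surjective g := by
      intro y
      obtain ⟨x, hx⟩ := hsurj y
      exact ⟨Submodule.Quotient.mk x, by rwa [hgdef, Submodule.liftQ_apply]⟩
    refine ⟨LinearEquiv.ofBijective g ⟨hginj, hgsurj⟩, fun x => ?_⟩
    rfl
end

section
/- Let R be a commutative ring, e ≥ 2 an integer, A := R[X]/(X^e), π the image of X, E a finite free A-module of rank h₁, and let 0 = F^{[0]} ⊆ F^{[1]} ⊆ ⋯ ⊆ F^{[e]} be a Pappas–Rapoport filtration of rank d₁ on E, with 0 < d₁ < h₁. For 0 ≤ j ≤ e−1 set F'^{[j]} := {x ∈ E : π·x ∈ F^{[j]}}. Then for every 2 ≤ j ≤ e: (i) multiplication by π induces a well-defined R-module isomorphism F'^{[j−1]}/F'^{[j−2]} ≅ F^{[j−1]}/F^{[j−2]}; (ii) the composition of the map M^{[j]} : F^{[j]}/F^{[j−1]} → F^{[j−1]}/F^{[j−2]} induced by multiplication by π (the j-th primitive Hasse map) with the inverse of the isomorphism in (i) equals the map F^{[j]}/F^{[j−1]} → F'^{[j−1]}/F'^{[j−2]} induced by the inclusion F^{[j]} ⊆ F'^{[j−1]}.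 -/
lemma aux_div' (R : Type*) [CommRing R] (e k : ℕ) (hk : k < e)
    (c : TruncPoly R e) (hc : piX R e ^ k * c = 0) :
    ∃ g : TruncPoly R e, piX R e * g = c := by
  obtain ⟨p, rfl⟩ := Ideal.Quotient.mk_surjective c
  have : (Ideal.Quotient.mk _ (Polynomial.X ^ k * p) : TruncPoly R e) = 0 := by
    rw [map_mul, map_pow]; exact hc
  rw [Ideal.Quotient.eq_zero_iff_mem, Ideal.mem_span_singleton] at this
  obtain ⟨q, hq⟩ := this
  have hkey : p = Polynomial.X ^ (e - k) * q := by
    have : (Polynomial.X : Polynomial R) ^ k * p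
        = Polynomial.X ^ k * (Polynomial.X ^ (e - k) * q) := by
      rw [hq, ← mul_assoc, ← pow_add]
      congr 2
      omega
    exact (Polynomial.isRegular_X_pow k).left this
  refine ⟨Ideal.Quotient.mk _ (Polynomial.X ^ (e - k - 1) * q), ?_⟩
  rw [hkey]
  simp only [map_mul, map_pow, piX]
  rw [← mul_assoc, ← pow_succ']
  congr 2
  omega

lemma aux_div_mod' (R : Type*) [CommRing R] (e : ℕ)
    (E : Type*) [AddCommGroup E] [Module (TruncPoly R e) E]
    [Module.Finite (TruncPoly R e) E] [Module.Free (TruncPoly R e) E]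
    (k : ℕ) (hk : k < e) (y : E) (hy : piX R e ^ k • y = 0) :
    ∃ x : E, piX R e • x = y := by
  classical
  set A := TruncPoly R e
  let b := Module.Free.chooseBasis A E
  have hcoef : ∀ i, piX R e ^ k * b.repr y i = 0 := by
    intro i
    have : b.repr (piX R e ^ k • y) = piX R e ^ k • b.repr y := map_smul _ _ _
    rw [hy, map_zero] at this
    have := DFunLike.congr_fun this.symm i
    simpa using this
  choose g hg using fun i => aux_div' R e k hk _ (hcoef i)
  refine ⟨∑ i, g i • b i, ?_⟩
  rw [Finset.smul_sum]
  calc ∑ i, piX R e • g i • b i = ∑ i, b.repr y i • b i := by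
        refine Finset.sum_congr rfl fun i _ => ?_
        rw [smul_smul, hg]
      _ = y := b.sum_repr y

lemma aux_killed' (R : Type*) [CommRing R] (e : ℕ)
    (E : Type*) [AddCommGroup E] [Module (TruncPoly R e) E] [Module R E]
    [IsScalarTower R (TruncPoly R e) E] (F : ℕ → Submodule R E)
    (hF0 : F 0 = ⊥) (hpi : ∀ j < e, ∀ x ∈ F (j + 1), piX R e • x ∈ F j) :
    ∀ k ≤ e, ∀ x ∈ F k, piX R e ^ k • x = 0 := by
  intro k
  induction k with
  | zero =>
    intro _ x hx
    rw [hF0, Submodule.mem_bot] at hx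
    simp [hx]
  | succ n ih =>
    intro hn x hx
    have h1 : piX R e • x ∈ F n := hpi n (by omega) x hx
    have h2 := ih (by omega) _ h1
    rw [pow_succ, mul_smul]
    exact h2


/-- **The primitive Hasse map via the filtration `F'^{[•]}`.**
For `2 ≤ j ≤ e`, with `F'^{[j]} := {x ∈ E : π·x ∈ F^{[j]}}`:
(i) multiplication by `π` induces an `R`-module isomorphism
`φ : F'^{[j-1]}/F'^{[j-2]} ≅ F^{[j-1]}/F^{[j-2]}`;
(ii) the primitive Hasse map `M^{[j]} : F^{[j]}/F^{[j-1]} → F^{[j-1]}/F^{[j-2]}` (induced by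
multiplication by `π`) composed with `φ⁻¹` is the map `F^{[j]}/F^{[j-1]} → F'^{[j-1]}/F'^{[j-2]}`
induced by the inclusion `F^{[j]} ⊆ F'^{[j-1]}`; equivalently `φ ∘ ι = M^{[j]}` where `ι` is
the inclusion-induced map. -/
theorem primitive_hasse_map_via_preimage_filtration
    (R : Type*) [CommRing R] (e : ℕ) (he : 2 ≤ e) (h₁ d₁ : ℕ)
    (hd : 0 < d₁) (hdh : d₁ < h₁)
    (E : Type*) [AddCommGroup E] [Module (TruncPoly R e) E] [Module R E]
    [IsScalarTower R (TruncPoly R e) E]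
    [Module.Finite (TruncPoly R e) E] [Module.Free (TruncPoly R e) E]
    (hrank : Module.finrank (TruncPoly R e) E = h₁)
    (F : ℕ → Submodule R E) (hF : IsPRFiltration R e E d₁ F)
    (j : ℕ) (hj1 : 2 ≤ j) (hje : j ≤ e) :
    ∃ φ : (↥(PRdiv R e E F (j - 1)) ⧸
          (PRdiv R e E F (j - 2)).comap (PRdiv R e E F (j - 1)).subtype) ≃ₗ[R]
        (↥(F (j - 1)) ⧸ (F (j - 2)).comap (F (j - 1)).subtype),
      (∀ (x : PRdiv R e E F (j - 1)) (hx : piX R e • (x : E) ∈ F (j - 1)),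
        φ (Submodule.Quotient.mk x) =
          Submodule.Quotient.mk (⟨piX R e • (x : E), hx⟩ : F (j - 1))) ∧
      ∀ (M : (↥(F j) ⧸ (F (j - 1)).comap (F j).subtype) →ₗ[R]
          (↥(F (j - 1)) ⧸ (F (j - 2)).comap (F (j - 1)).subtype)),
        (∀ (x : F j) (hx : piX R e • (x : E) ∈ F (j - 1)),
          M (Submodule.Quotient.mk x) =
            Submodule.Quotient.mk (⟨piX R e • (x : E), hx⟩ : F (j - 1))) →
        ∀ (ι : (↥(F j) ⧸ (F (j - 1)).comap (F j).subtype) →ₗ[R]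
            (↥(PRdiv R e E F (j - 1)) ⧸
              (PRdiv R e E F (j - 2)).comap (PRdiv R e E F (j - 1)).subtype)),
          (∀ (x : F j) (hx : (x : E) ∈ PRdiv R e E F (j - 1)),
            ι (Submodule.Quotient.mk x) =
              Submodule.Quotient.mk (⟨(x : E), hx⟩ : PRdiv R e E F (j - 1))) →
          ∀ z, φ (ι z) = M z := by
  
  classical
  obtain ⟨hF0, hmono, hcompl, hquot, hpi⟩ := hF
  have hmul : ∀ x : E, mulPi R e E 1 x = piX R e • x := by
    intro x; simp [mulPi, pow_one]
  set F' := PRdiv R e E F (j - 1) with hF'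
  set F'' := PRdiv R e E F (j - 2) with hF''
  have hres : ∀ x ∈ F', mulPi R e E 1 x ∈ F (j - 1) := fun x hx => hx
  let ψ₀ : F' →ₗ[R] F (j - 1) := (mulPi R e E 1).restrict hres
  let ψ : F' →ₗ[R] (↥(F (j - 1)) ⧸ (F (j - 2)).comap (F (j - 1)).subtype) :=
    ((F (j - 2)).comap (F (j - 1)).subtype).mkQ.comp ψ₀
  have hψ : ∀ x : F', ψ x = Submodule.Quotient.mk
      (⟨piX R e • (x : E), by rw [← hmul]; exact x.2⟩ : F (j - 1)) := by
    intro x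
    show Submodule.Quotient.mk (ψ₀ x) = _
    congr 1
    apply Subtype.ext
    show mulPi R e E 1 (x : E) = piX R e • (x : E)
    exact hmul _
  have hker : ∀ x : F', ψ x = 0 ↔ (x : E) ∈ F'' := by
    intro x
    rw [hψ, Submodule.Quotient.mk_eq_zero]
    show piX R e • (x : E) ∈ F (j - 2) ↔ _
    rw [hF'', PRdiv, Submodule.mem_comap, hmul]
  have hle : F''.comap F'.subtype ≤ LinearMap.ker ψ := by
    intro x hx
    rw [LinearMap.mem_ker, hker]
    exact hx
  let φ₀ := Submodule.liftQ (F''.comap F'.subtype) ψ hle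
  have hφ₀ : ∀ x : F', φ₀ (Submodule.Quotient.mk x) = ψ x := fun x => rfl
  have hinj : Function.Injective φ₀ := by
    rw [← LinearMap.ker_eq_bot]
    apply Submodule.ker_liftQ_eq_bot
    intro x hx
    rw [LinearMap.mem_ker, hker] at hx
    exact hx
  have hsurj : Function.Surjective φ₀ := by
    intro q
    obtain ⟨y, rfl⟩ := Submodule.Quotient.mk_surjective _ q
    have hy : piX R e ^ (j - 1) • (y : E) = 0 :=
      aux_killed' R e E F hF0 hpi (j - 1) (by omega) _ y.2
    obtain ⟨x, hx⟩ := aux_div_mod' R e E (j - 1) (by omega) _ hy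
    have hxF : x ∈ F' := by
      rw [hF', PRdiv, Submodule.mem_comap, hmul, hx]
      exact y.2
    refine ⟨Submodule.Quotient.mk ⟨x, hxF⟩, ?_⟩
    rw [hφ₀, hψ]
    congr 1
    exact Subtype.ext hx
  refine ⟨LinearEquiv.ofBijective φ₀ ⟨hinj, hsurj⟩, ?_, ?_⟩
  · intro x hx
    show φ₀ (Submodule.Quotient.mk x) = _
    rw [hφ₀, hψ]
  · intro M hM ι hι z
    obtain ⟨x, rfl⟩ := Submodule.Quotient.mk_surjective _ z
    have hj' : j - 1 + 1 = j := by omega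
    have hx1 : piX R e • (x : E) ∈ F (j - 1) := by
      apply hpi (j - 1) (by omega)
      rw [hj']; exact x.2
    have hx2 : (x : E) ∈ F' := by
      rw [hF', PRdiv, Submodule.mem_comap, hmul]; exact hx1
    rw [hι x hx2, hM x hx1]
    show φ₀ (Submodule.Quotient.mk _) = _
    rw [hφ₀, hψ]
end

section
/- Let R be a commutative ring, e ≥ 2 an integer, A := R[X]/(X^e), π the image of X, E a finite free A-module of rank h₁, and let 0 = F^{[0]} ⊆ F^{[1]} ⊆ ⋯ ⊆ F^{[e]} be a Pappas–Rapoport filtration of rank d₁ on E, with 0 < d₁ < h₁. For 1 ≤ j ≤ e set F^{[e+j]} := {x ∈ E : π^j·x ∈ F^{[e−j]}} and for 0 ≤ j ≤ e−1 set F'^{[j]} := {x ∈ E : π·x ∈ F^{[j]}}. Then for every 1 ≤ j ≤ e, multiplication by π^{e−j} induces a well-defined R-module isomorphism α^{[j]} : F^{[2e+1−j]}/F^{[2e−j]} ≅ F'^{[j−1]}/F^{[j]} (well-defined because π^{e−j}·F^{[2e+1−j]} ⊆ F'^{[j−1]} and π^{e−j}·F^{[2e−j]} ⊆ F^{[j]}).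 -/
lemma piX_pow_dvd {R : Type*} [CommRing R] {e j : ℕ} (hj : j ≤ e)
    (a : TruncPoly R e) (ha : piX R e ^ j * a = 0) :
    ∃ c, a = piX R e ^ (e - j) * c := by
  obtain ⟨p, rfl⟩ := Ideal.Quotient.mk_surjective a
  rw [piX, ← map_pow, ← map_mul, Ideal.Quotient.eq_zero_iff_mem,
    Ideal.mem_span_singleton] at ha
  obtain ⟨q, hq⟩ := ha
  have hp : p = Polynomial.X ^ (e - j) * q := by
    have h2 : Polynomial.X ^ j * p
        = Polynomial.X ^ j * ((Polynomial.X : Polynomial R) ^ (e - j) * q) := by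
      rw [← mul_assoc, ← pow_add, Nat.add_sub_cancel' hj]
      exact hq
    ext n
    have := congrArg (fun r => Polynomial.coeff r (n + j)) h2
    simpa [Polynomial.coeff_X_pow_mul] using this
  exact ⟨Ideal.Quotient.mk _ q, by rw [hp, map_mul, piX, ← map_pow]⟩

lemma exists_piX_smul {R : Type*} [CommRing R] {e : ℕ}
    {E : Type*} [AddCommGroup E] [Module (TruncPoly R e) E]
    [Module.Finite (TruncPoly R e) E] [Module.Free (TruncPoly R e) E]
    {j : ℕ} (hj : j ≤ e) (y : E) (hy : piX R e ^ j • y = 0) :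
    ∃ x : E, y = piX R e ^ (e - j) • x := by
  let b := Module.Free.chooseBasis (TruncPoly R e) E
  set a := b.equivFun y with ha
  have h1 : ∀ i, piX R e ^ j * a i = 0 := by
    intro i
    have h0 : b.equivFun (piX R e ^ j • y) i = 0 := by rw [hy]; simp
    rw [map_smul] at h0
    simpa [smul_eq_mul, ha] using h0
  choose c hc using fun i => piX_pow_dvd hj (a i) (h1 i)
  refine ⟨b.equivFun.symm c, ?_⟩
  rw [← map_smul]
  have h2 : piX R e ^ (e - j) • c = a := by
    funext i
    simp only [Pi.smul_apply, smul_eq_mul]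
    exact (hc i).symm
  rw [h2, ha, LinearEquiv.symm_apply_apply]

lemma prf_kill {R : Type*} [CommRing R] {e : ℕ}
    {E : Type*} [AddCommGroup E] [Module (TruncPoly R e) E] [Module R E]
    [IsScalarTower R (TruncPoly R e) E] {d₁ : ℕ} {F : ℕ → Submodule R E}
    (hF : IsPRFiltration R e E d₁ F) :
    ∀ i ≤ e, ∀ x ∈ F i, piX R e ^ i • x = 0 := by
  intro i
  induction i with
  | zero =>
    intro _ x hx
    rw [hF.1, Submodule.mem_bot] at hx
    simp [hx]
  | succ n ih =>
    intro hn x hx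
    have h1 : piX R e • x ∈ F n := hF.2.2.2.2 n (by omega) x hx
    have h2 := ih (by omega) _ h1
    rw [pow_succ, mul_smul]
    exact h2

/-- **The isomorphisms `α^{[j]}`.**
For `1 ≤ j ≤ e`, with `F^{[e+i]} := {x ∈ E : π^i·x ∈ F^{[e-i]}}` and
`F'^{[i]} := {x ∈ E : π·x ∈ F^{[i]}}`, multiplication by `π^{e-j}` induces a well-defined
`R`-module isomorphism `α^{[j]} : F^{[2e+1-j]}/F^{[2e-j]} ≅ F'^{[j-1]}/F^{[j]}`
(well-defined because `π^{e-j}·F^{[2e+1-j]} ⊆ F'^{[j-1]}` and `π^{e-j}·F^{[2e-j]} ⊆ F^{[j]}`). -/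
theorem pappas_rapoport_alpha_iso
    (R : Type*) [CommRing R] (e : ℕ) (he : 2 ≤ e) (h₁ d₁ : ℕ)
    (hd : 0 < d₁) (hdh : d₁ < h₁)
    (E : Type*) [AddCommGroup E] [Module (TruncPoly R e) E] [Module R E]
    [IsScalarTower R (TruncPoly R e) E]
    [Module.Finite (TruncPoly R e) E] [Module.Free (TruncPoly R e) E]
    (hrank : Module.finrank (TruncPoly R e) E = h₁)
    (F : ℕ → Submodule R E) (hF : IsPRFiltration R e E d₁ F)
    (j : ℕ) (hj1 : 1 ≤ j) (hje : j ≤ e) :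
    (∀ x ∈ PRext R e E F (e + 1 - j), piX R e ^ (e - j) • x ∈ PRdiv R e E F (j - 1)) ∧
    (∀ x ∈ PRext R e E F (e - j), piX R e ^ (e - j) • x ∈ F j) ∧
    ∃ α : (↥(PRext R e E F (e + 1 - j)) ⧸
          (PRext R e E F (e - j)).comap (PRext R e E F (e + 1 - j)).subtype) ≃ₗ[R]
        (↥(PRdiv R e E F (j - 1)) ⧸ (F j).comap (PRdiv R e E F (j - 1)).subtype),
      ∀ (x : PRext R e E F (e + 1 - j)) (hx : piX R e ^ (e - j) • (x : E) ∈ PRdiv R e E F (j - 1)),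
        α (Submodule.Quotient.mk x) =
          Submodule.Quotient.mk (⟨piX R e ^ (e - j) • (x : E), hx⟩ : PRdiv R e E F (j - 1)) := by
  have h1 : e - (e + 1 - j) = j - 1 := by omega
  have h2 : e - (e - j) = j := by omega
  have h3 : e + 1 - j = (e - j) + 1 := by omega
  have mem_ext1 : ∀ x : E,
      x ∈ PRext R e E F (e + 1 - j) ↔ piX R e ^ (e + 1 - j) • x ∈ F (j - 1) := by
    intro x
    rw [PRext, Submodule.mem_comap, h1]
    simp [mulPi]
  have mem_ext2 : ∀ x : E,
      x ∈ PRext R e E F (e - j) ↔ piX R e ^ (e - j) • x ∈ F j := by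
    intro x
    rw [PRext, Submodule.mem_comap, h2]
    simp [mulPi]
  have mem_div : ∀ i : ℕ, ∀ x : E, x ∈ PRdiv R e E F i ↔ piX R e • x ∈ F i := by
    intro i x
    rw [PRdiv, Submodule.mem_comap]
    simp [mulPi]
  have key1 : ∀ x ∈ PRext R e E F (e + 1 - j),
      piX R e ^ (e - j) • x ∈ PRdiv R e E F (j - 1) := by
    intro x hx
    rw [mem_div]
    rw [mem_ext1] at hx
    rw [smul_smul, ← pow_succ']
    rwa [h3] at hx
  have key2 : ∀ x ∈ PRext R e E F (e - j), piX R e ^ (e - j) • x ∈ F j :=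
    fun x hx => (mem_ext2 x).mp hx
  refine ⟨key1, key2, ?_⟩
  let g : PRext R e E F (e + 1 - j) →ₗ[R] PRdiv R e E F (j - 1) :=
    LinearMap.codRestrict _
      ((mulPi R e E (e - j)).comp (PRext R e E F (e + 1 - j)).subtype)
      (fun x => by simpa [mulPi] using key1 x.1 x.2)
  let β := ((F j).comap (PRdiv R e E F (j - 1)).subtype).mkQ.comp g
  have hβ : ∀ (x : PRext R e E F (e + 1 - j))
      (hx : piX R e ^ (e - j) • (x : E) ∈ PRdiv R e E F (j - 1)),
      β x = Submodule.Quotient.mk (⟨piX R e ^ (e - j) • (x : E), hx⟩ :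
        PRdiv R e E F (j - 1)) := by
    intro x hx
    show Submodule.Quotient.mk (g x) = _
    congr 1
  have hker : ∀ x : PRext R e E F (e + 1 - j),
      β x = 0 ↔ (x : E) ∈ PRext R e E F (e - j) := by
    intro x
    rw [show β x = Submodule.mkQ _ (g x) from rfl, Submodule.mkQ_apply,
      Submodule.Quotient.mk_eq_zero, Submodule.mem_comap, mem_ext2]
    simp [g, mulPi]
  have hsurj : Function.Surjective β := by
    intro z
    obtain ⟨⟨y, hy⟩, rfl⟩ := Submodule.mkQ_surjective _ z
    have hy' := (mem_div (j - 1) y).mp hy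
    have hy2 : piX R e ^ j • y = 0 := by
      have hk := prf_kill hF (j - 1) (by omega) _ hy'
      rw [smul_smul, ← pow_succ, Nat.sub_add_cancel hj1] at hk
      exact hk
    obtain ⟨x, hx⟩ := exists_piX_smul hje y hy2
    have hxmem : x ∈ PRext R e E F (e + 1 - j) := by
      rw [mem_ext1, h3, pow_succ', mul_smul, ← hx]
      exact hy'
    refine ⟨⟨x, hxmem⟩, ?_⟩
    have hgoal : piX R e ^ (e - j) • x ∈ PRdiv R e E F (j - 1) := key1 x hxmem
    rw [hβ ⟨x, hxmem⟩ hgoal]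
    congr 1
    ext
    exact hx.symm
  have hle : (PRext R e E F (e - j)).comap (PRext R e E F (e + 1 - j)).subtype ≤
      LinearMap.ker β := fun x hx => (hker x).mpr hx
  let φ := Submodule.liftQ _ β hle
  have hinj : Function.Injective φ := by
    rw [← LinearMap.ker_eq_bot]
    apply Submodule.ker_liftQ_eq_bot
    intro x hx
    exact (hker x).mp hx
  have hφsurj : Function.Surjective φ := by
    intro z
    obtain ⟨x, hx⟩ := hsurj z
    exact ⟨Submodule.Quotient.mk x, by rwa [Submodule.liftQ_apply]⟩
  refine ⟨LinearEquiv.ofBijective φ (show Function.Bijective φ from ⟨hinj, hφsurj⟩), ?_⟩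
  intro x hx
  rw [LinearEquiv.ofBijective_apply]
  show φ (Submodule.Quotient.mk x) = _
  rw [Submodule.liftQ_apply]
  exact hβ x hx
end

section
/- Let R be a commutative ring, e ≥ 2 an integer, A := R[X]/(X^e), π the image of X, E a finite free A-module of rank h₁, and let 0 = F^{[0]} ⊆ F^{[1]} ⊆ ⋯ ⊆ F^{[e]} be a Pappas–Rapoport filtration of rank d₁ on E, with 0 < d₁ < h₁. For 1 ≤ j ≤ e set F^{[e+j]} := {x ∈ E : π^j·x ∈ F^{[e−j]}} and for 0 ≤ j ≤ e−1 set F'^{[j]} := {x ∈ E : π·x ∈ F^{[j]}}. For 1 ≤ j ≤ e let α^{[j]} : F^{[2e+1−j]}/F^{[2e−j]} ≅ F'^{[j−1]}/F^{[j]} be the isomorphism induced by multiplication by π^{e−j}. Then for every 2 ≤ j ≤ e the following square commutes: α^{[j]} composed with the map F^{[2e+2−j]}/F^{[2e+1−j]} → F^{[2e+1−j]}/F^{[2e−j]} induced by multiplication by π equals the map F'^{[j−2]}/F^{[j−1]} → F'^{[j−1]}/F^{[j]} induced by the inclusion F'^{[j−2]} ⊆ F'^{[j−1]}, composed with α^{[j−1]}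 : F^{[2e+2−j]}/F^{[2e+1−j]} ≅ F'^{[j−2]}/F^{[j−1]}. (That is, under the isomorphisms α^{[j]}, the dual primitive Hasse map—multiplication by π on the graded pieces of the extended filtration—is identified with the natural map induced by inclusion.) -/
/-- **The dual primitive Hasse map is the natural inclusion map.**
For `2 ≤ j ≤ e`, let `α^{[j]} : F^{[2e+1-j]}/F^{[2e-j]} ≅ F'^{[j-1]}/F^{[j]}` and
`α^{[j-1]} : F^{[2e+2-j]}/F^{[2e+1-j]} ≅ F'^{[j-2]}/F^{[j-1]}` be the isomorphisms induced by
multiplication by `π^{e-j}` resp. `π^{e-j+1}`, let `μ` be the map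
`F^{[2e+2-j]}/F^{[2e+1-j]} → F^{[2e+1-j]}/F^{[2e-j]}` induced by multiplication by `π` (the
dual primitive Hasse map), and let `ι : F'^{[j-2]}/F^{[j-1]} → F'^{[j-1]}/F^{[j]}` be the map
induced by the inclusion `F'^{[j-2]} ⊆ F'^{[j-1]}`. Then `α^{[j]} ∘ μ = ι ∘ α^{[j-1]}`. -/
theorem dual_primitive_hasse_map_is_natural_map
    (R : Type*) [CommRing R] (e : ℕ) (he : 2 ≤ e) (h₁ d₁ : ℕ)
    (hd : 0 < d₁) (hdh : d₁ < h₁)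
    (E : Type*) [AddCommGroup E] [Module (TruncPoly R e) E] [Module R E]
    [IsScalarTower R (TruncPoly R e) E]
    [Module.Finite (TruncPoly R e) E] [Module.Free (TruncPoly R e) E]
    (hrank : Module.finrank (TruncPoly R e) E = h₁)
    (F : ℕ → Submodule R E) (hF : IsPRFiltration R e E d₁ F)
    (j : ℕ) (hj1 : 2 ≤ j) (hje : j ≤ e)
    (αj : (↥(PRext R e E F (e + 1 - j)) ⧸
          (PRext R e E F (e - j)).comap (PRext R e E F (e + 1 - j)).subtype) ≃ₗ[R]
        (↥(PRdiv R e E F (j - 1)) ⧸ (F j).comap (PRdiv R e E F (j - 1)).subtype))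
    (hαj : ∀ (x : PRext R e E F (e + 1 - j))
        (hx : piX R e ^ (e - j) • (x : E) ∈ PRdiv R e E F (j - 1)),
      αj (Submodule.Quotient.mk x) =
        Submodule.Quotient.mk (⟨piX R e ^ (e - j) • (x : E), hx⟩ : PRdiv R e E F (j - 1)))
    (αj1 : (↥(PRext R e E F (e + 2 - j)) ⧸
          (PRext R e E F (e + 1 - j)).comap (PRext R e E F (e + 2 - j)).subtype) ≃ₗ[R]
        (↥(PRdiv R e E F (j - 2)) ⧸ (F (j - 1)).comap (PRdiv R e E F (j - 2)).subtype))
    (hαj1 : ∀ (x : PRext R e E F (e + 2 - j))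
        (hx : piX R e ^ (e - j + 1) • (x : E) ∈ PRdiv R e E F (j - 2)),
      αj1 (Submodule.Quotient.mk x) =
        Submodule.Quotient.mk (⟨piX R e ^ (e - j + 1) • (x : E), hx⟩ : PRdiv R e E F (j - 2)))
    (μ : (↥(PRext R e E F (e + 2 - j)) ⧸
          (PRext R e E F (e + 1 - j)).comap (PRext R e E F (e + 2 - j)).subtype) →ₗ[R]
        (↥(PRext R e E F (e + 1 - j)) ⧸
          (PRext R e E F (e - j)).comap (PRext R e E F (e + 1 - j)).subtype))
    (hμ : ∀ (x : PRext R e E F (e + 2 - j)) (hx : piX R e • (x : E) ∈ PRext R e E F (e + 1 - j)),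
      μ (Submodule.Quotient.mk x) =
        Submodule.Quotient.mk (⟨piX R e • (x : E), hx⟩ : PRext R e E F (e + 1 - j)))
    (ι : (↥(PRdiv R e E F (j - 2)) ⧸ (F (j - 1)).comap (PRdiv R e E F (j - 2)).subtype) →ₗ[R]
        (↥(PRdiv R e E F (j - 1)) ⧸ (F j).comap (PRdiv R e E F (j - 1)).subtype))
    (hι : ∀ (x : PRdiv R e E F (j - 2)) (hx : (x : E) ∈ PRdiv R e E F (j - 1)),
      ι (Submodule.Quotient.mk x) =
        Submodule.Quotient.mk (⟨(x : E), hx⟩ : PRdiv R e E F (j - 1))) :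
    ∀ z, αj (μ z) = ι (αj1 z) := by
  obtain ⟨h0, hmono, -, -, hπ⟩ := hF
  intro z
  obtain ⟨x, rfl⟩ := Submodule.Quotient.mk_surjective _ z
  have key : piX R e ^ (e + 2 - j) • (x : E) ∈ F (j - 2) := by
    have hx := x.2
    simpa [PRext, mulPi, show e - (e + 2 - j) = j - 2 by omega] using hx
  have hF12 : F (j - 2) ≤ F (j - 1) := by
    have := hmono (j - 2) (by omega)
    simpa [show j - 2 + 1 = j - 1 by omega] using this
  have hx1 : piX R e • (x : E) ∈ PRext R e E F (e + 1 - j) := by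
    simp only [PRext, Submodule.mem_comap, mulPi, LinearMap.coe_restrictScalars,
      LinearMap.lsmul_apply, show e - (e + 1 - j) = j - 1 by omega]
    have : (piX R e ^ (e + 1 - j)) • piX R e • (x : E)
        = piX R e ^ (e + 2 - j) • (x : E) := by
      rw [smul_smul, ← pow_succ, show e + 1 - j + 1 = e + 2 - j by omega]
    rw [this]
    exact hF12 key
  have hx2 : piX R e ^ (e - j) •
      ((⟨piX R e • (x : E), hx1⟩ : PRext R e E F (e + 1 - j)) : E) ∈ PRdiv R e E F (j - 1) := by
    simp only [PRdiv, Submodule.mem_comap, mulPi, LinearMap.coe_restrictScalars,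
      LinearMap.lsmul_apply, pow_one]
    have : piX R e • piX R e ^ (e - j) • piX R e • (x : E)
        = piX R e ^ (e + 2 - j) • (x : E) := by
      rw [smul_smul, smul_smul, show piX R e * piX R e ^ (e - j) * piX R e
          = piX R e ^ (e + 2 - j) by
        rw [show e + 2 - j = 1 + (e - j) + 1 by omega, pow_add, pow_add, pow_one]]
    rw [this]
    exact hF12 key
  have hx3 : piX R e ^ (e - j + 1) • (x : E) ∈ PRdiv R e E F (j - 2) := by
    simp only [PRdiv, Submodule.mem_comap, mulPi, LinearMap.coe_restrictScalars,
      LinearMap.lsmul_apply, pow_one]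
    have : piX R e • piX R e ^ (e - j + 1) • (x : E)
        = piX R e ^ (e + 2 - j) • (x : E) := by
      rw [smul_smul, ← pow_succ', show e - j + 1 + 1 = e + 2 - j by omega]
    rw [this]
    exact key
  have hx4 : ((⟨piX R e ^ (e - j + 1) • (x : E), hx3⟩ : PRdiv R e E F (j - 2)) : E)
      ∈ PRdiv R e E F (j - 1) := by
    simp only [PRdiv, Submodule.mem_comap, mulPi, LinearMap.coe_restrictScalars,
      LinearMap.lsmul_apply, pow_one]
    have : piX R e • piX R e ^ (e - j + 1) • (x : E)
        = piX R e ^ (e + 2 - j) • (x : E) := by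
      rw [smul_smul, ← pow_succ', show e - j + 1 + 1 = e + 2 - j by omega]
    rw [this]
    exact hF12 key
  rw [hμ x hx1, hαj _ hx2, hαj1 x hx3, hι _ hx4]
  refine congrArg _ (Subtype.ext ?_)
  show piX R e ^ (e - j) • piX R e • (x : E) = piX R e ^ (e - j + 1) • (x : E)
  rw [smul_smul, ← pow_succ]
end
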